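/- arXiv:2005.05745 — 3 statements merged into one kernel-verified Lean document; each statement's English description precedes it below -/
import Mathlib

section
/- Let P, Q ∈ B_A(H). Then ω_𝔸([[P,Q],[0,0]]) ≥ (1/2)√( max{‖P+Q‖_A², ‖P−Q‖_A²} − 2ω_A(PQ^{♯_A}) ); in particular the quantity under the square root is nonnegative. -/
set_option synthInstance.maxHeartbeats 1000000
set_option maxHeartbeats 2000000


open ContinuousLinearMap

/-- The `A`-seminorm of a vector: `‖x‖_A = √⟨Ax, x⟩`. -/
noncomputable def vnormA {H : Type*} [NormedAddCommGroup H] [InnerProductSpace ℂ H]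
    (A : H →L[ℂ] H) (x : H) : ℝ :=
  Real.sqrt (RCLike.re (inner ℂ (A x) x : ℂ))

/-- `T` is `A`-bounded, i.e. `T ∈ B_{A^{1/2}}(H)`. -/
def ABounded {H : Type*} [NormedAddCommGroup H] [InnerProductSpace ℂ H]
    (A T : H →L[ℂ] H) : Prop :=
  ∃ c : ℝ, 0 < c ∧ ∀ x, vnormA A (T x) ≤ c * vnormA A x

/-- The `A`-operator seminorm `‖T‖_A = sup{‖Tx‖_A : ‖x‖_A = 1}`. -/
noncomputable def opNormA {H : Type*} [NormedAddCommGroup H] [InnerProductSpace ℂ H]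
    (A T : H →L[ℂ] H) : ℝ :=
  sSup {c : ℝ | ∃ x : H, vnormA A x = 1 ∧ c = vnormA A (T x)}

/-- The `A`-numerical radius `ω_A(T) = sup{|⟨ATx, x⟩| : ‖x‖_A = 1}`. -/
noncomputable def wA {H : Type*} [NormedAddCommGroup H] [InnerProductSpace ℂ H]
    (A T : H →L[ℂ] H) : ℝ :=
  sSup {c : ℝ | ∃ x : H, vnormA A x = 1 ∧ c = ‖(inner ℂ (A (T x)) x : ℂ)‖}

/-- `Ts` is the reduced (Douglas) solution of `AX = T*A`, i.e. `Ts = T^{♯_A}`. -/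
def IsReducedAdjoint {H : Type*} [NormedAddCommGroup H] [InnerProductSpace ℂ H]
    [CompleteSpace H] (A T Ts : H →L[ℂ] H) : Prop :=
  A ∘L Ts = (ContinuousLinearMap.adjoint T) ∘L A ∧
    ∀ y, Ts y ∈ closure (Set.range A)

/-- The `2 × 2` operator matrix `[[P, Q], [R, S]]` acting on `H ⊕ H` (with the `ℓ²` product
inner ℂ product). -/
noncomputable def blk {H : Type*} [NormedAddCommGroup H] [InnerProductSpace ℂ H]
    (P Q R S : H →L[ℂ] H) : WithLp 2 (H × H) →L[ℂ] WithLp 2 (H × H) :=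
  letI e := (WithLp.prodContinuousLinearEquiv 2 ℂ H H)
  (e.symm.toContinuousLinearMap) ∘L
    ((P.comp (fst ℂ H H) + Q.comp (snd ℂ H H)).prod
      (R.comp (fst ℂ H H) + S.comp (snd ℂ H H))) ∘L
    (e.toContinuousLinearMap)

/-- `𝔸 = diag(A, A)` on `H ⊕ H`. -/
noncomputable def AA {H : Type*} [NormedAddCommGroup H] [InnerProductSpace ℂ H]
    (A : H →L[ℂ] H) : WithLp 2 (H × H) →L[ℂ] WithLp 2 (H × H) :=
  blk A 0 0 A

section Framework
variable {E : Type*} [NormedAddCommGroup E] [InnerProductSpace ℂ E]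
variable {A R : E →L[ℂ] E}
variable (hRsa : ∀ x y : E, (inner ℂ (R x) y : ℂ) = inner ℂ x (R y))
variable (hRR : ∀ x : E, R (R x) = A x)
include hRsa hRR

lemma innerA (x y : E) : (inner ℂ (A x) y : ℂ) = inner ℂ (R x) (R y) := by
  rw [← hRR, hRsa]

lemma vnorm_eq (x : E) : vnormA A x = ‖R x‖ := by
  unfold vnormA
  rw [innerA hRsa hRR, inner_self_eq_norm_sq, Real.sqrt_sq (norm_nonneg _)]

omit hRsa hRR in
lemma wA_nonneg (A T : E →L[ℂ] E) : 0 ≤ wA A T :=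
  Real.sSup_nonneg (by rintro c ⟨x, -, rfl⟩; positivity)

lemma wA_bddAbove (T : E →L[ℂ] E) {c : ℝ}
    (hc : ∀ x, ‖R (T x)‖ ≤ c * ‖R x‖) :
    BddAbove {t : ℝ | ∃ x : E, vnormA A x = 1 ∧ t = ‖(inner ℂ (A (T x)) x : ℂ)‖} := by
  refine ⟨c, ?_⟩
  rintro t ⟨x, hx, rfl⟩
  rw [vnorm_eq hRsa hRR] at hx
  rw [innerA hRsa hRR]
  calc ‖(inner ℂ (R (T x)) (R x) : ℂ)‖ ≤ ‖R (T x)‖ * ‖R x‖ := by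
        exact norm_inner_le_norm _ _
    _ ≤ c * ‖R x‖ := by
        have h := hc x
        rw [hx] at h ⊢
        simpa using h
    _ = c := by rw [hx, mul_one]

lemma wA_le_elt (T : E →L[ℂ] E) {c : ℝ} (hc : ∀ x, ‖R (T x)‖ ≤ c * ‖R x‖)
    (x : E) (hx : ‖R x‖ = 1) :
    ‖(inner ℂ (R (T x)) (R x) : ℂ)‖ ≤ wA A T := by
  refine le_csSup (wA_bddAbove hRsa hRR T hc) ?_
  exact ⟨x, by rw [vnorm_eq hRsa hRR]; exact hx, by rw [innerA hRsa hRR]⟩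

lemma wA_quad (T : E →L[ℂ] E) {c : ℝ} (hc : ∀ x, ‖R (T x)‖ ≤ c * ‖R x‖)
    (y : E) :
    ‖(inner ℂ (R (T y)) (R y) : ℂ)‖ ≤ wA A T * ‖R y‖ ^ 2 := by
  rcases eq_or_lt_of_le (norm_nonneg (R y)) with h0 | hpos
  · have hRy : R y = 0 := by rwa [eq_comm, norm_eq_zero] at h0
    rw [hRy, inner_zero_right]
    simp
  · set r : ℝ := ‖R y‖
    have hx : ‖R (((r⁻¹ : ℝ) : ℂ) • y)‖ = 1 := by
      rw [map_smul, norm_smul]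
      simp [r, norm_inv, abs_of_pos hpos]
      field_simp
      exact div_self hpos.ne'
    have h := wA_le_elt hRsa hRR T hc _ hx
    rw [map_smul, map_smul, map_smul, inner_smul_left, inner_smul_right] at h
    rw [Complex.conj_ofReal, norm_mul, norm_mul] at h
    simp only [Complex.norm_real, Real.norm_eq_abs] at h
    have hr : |r⁻¹| = r⁻¹ := abs_of_pos (by positivity)
    rw [hr] at h
    have hwnn := wA_nonneg A T
    have h2 : r⁻¹ * (r⁻¹ * ‖(inner ℂ (R (T y)) (R y) : ℂ)‖) ≤ wA A T := h
    have hrne : r ≠ 0 := ne_of_gt hpos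
    have hid : ‖(inner ℂ (R (T y)) (R y) : ℂ)‖
        = (r⁻¹ * (r⁻¹ * ‖(inner ℂ (R (T y)) (R y) : ℂ)‖)) * r ^ 2 := by
      field_simp
    rw [hid]
    nlinarith [sq_nonneg r]

end Framework

-- polarization and transfer lemmas (to append after p1 content)
section Framework2
variable {E : Type*} [NormedAddCommGroup E] [InnerProductSpace ℂ E]
variable {A R : E →L[ℂ] E}
variable (hRsa : ∀ x y : E, (inner ℂ (R x) y : ℂ) = inner ℂ x (R y))
variable (hRR : ∀ x : E, R (R x) = A x)
include hRsa hRR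

lemma polar_sum (T : E →L[ℂ] E) {c : ℝ} (hc : ∀ x, ‖R (T x)‖ ≤ c * ‖R x‖)
    (z v : E) (hz : ‖R z‖ = 1) (hv : ‖R v‖ = 1) :
    ‖((inner ℂ (R (T z)) (R v) : ℂ) + inner ℂ (R (T v)) (R z))‖ ≤ 2 * wA A T := by
  have hplus := wA_quad hRsa hRR T hc (z + v)
  have hminus := wA_quad hRsa hRR T hc (z - v)
  have hexp : (inner ℂ (R (T (z+v))) (R (z+v)) : ℂ) - inner ℂ (R (T (z-v))) (R (z-v))
      = 2 * ((inner ℂ (R (T z)) (R v) : ℂ) + inner ℂ (R (T v)) (R z)) := by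
    simp only [map_add, map_sub, inner_add_left, inner_add_right, inner_sub_left,
      inner_sub_right]
    ring
  have hpar : ‖R (z+v)‖ ^ 2 + ‖R (z-v)‖ ^ 2 = 2 * (‖R z‖ ^ 2 + ‖R v‖ ^ 2) := by
    have := parallelogram_law_with_norm ℂ (R z) (R v)
    simp only [map_add, map_sub]
    nlinarith [this]
  have habs : ‖((inner ℂ (R (T (z+v))) (R (z+v)) : ℂ) - inner ℂ (R (T (z-v))) (R (z-v)))‖
      ≤ wA A T * ‖R (z+v)‖ ^ 2 + wA A T * ‖R (z-v)‖ ^ 2 := by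
    calc ‖((inner ℂ (R (T (z+v))) (R (z+v)) : ℂ) - inner ℂ (R (T (z-v))) (R (z-v)))‖
        ≤ ‖(inner ℂ (R (T (z+v))) (R (z+v)) : ℂ)‖
          + ‖(inner ℂ (R (T (z-v))) (R (z-v)) : ℂ)‖ := by
          exact norm_sub_le _ _
      _ ≤ _ := add_le_add hplus hminus
  rw [hexp] at habs
  rw [norm_mul] at habs
  simp only [Complex.norm_ofNat] at habs
  have : wA A T * ‖R (z+v)‖ ^ 2 + wA A T * ‖R (z-v)‖ ^ 2 = 4 * wA A T := by
    rw [← mul_add, hpar, hz, hv]; ring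
  rw [this] at habs
  linarith

lemma polar_bound (T : E →L[ℂ] E) {c : ℝ} (hc : ∀ x, ‖R (T x)‖ ≤ c * ‖R x‖)
    (z v : E) (hz : ‖R z‖ = 1) (hv : ‖R v‖ = 1) :
    ‖(inner ℂ (R (T z)) (R v) : ℂ)‖ ≤ 2 * wA A T := by
  set a : ℂ := inner ℂ (R (T z)) (R v)
  set b : ℂ := inner ℂ (R (T v)) (R z)
  have h1 : ‖(a + b)‖ ≤ 2 * wA A T := polar_sum hRsa hRR T hc z v hz hv
  have hv' : ‖R (Complex.I • v)‖ = 1 := by rw [map_smul, norm_smul]; simp [hv]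
  have h2' := polar_sum hRsa hRR T hc z (Complex.I • v) hz hv'
  have h2 : ‖(a - b)‖ ≤ 2 * wA A T := by
    have : (inner ℂ (R (T z)) (R (Complex.I • v)) : ℂ) + inner ℂ (R (T (Complex.I • v))) (R z)
        = Complex.I * (a - b) := by
      rw [map_smul, map_smul, map_smul, inner_smul_right, inner_smul_left]
      simp [Complex.conj_I]
      ring
    rw [this, norm_mul] at h2'
    simpa using h2'
  have : ‖a‖ ≤ (‖(a + b)‖ + ‖(a - b)‖) / 2 := by
    have : (2 : ℂ) * a = (a + b) + (a - b) := by ring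
    have habs : ‖(2 * a)‖ ≤ ‖(a + b)‖ + ‖(a - b)‖ := by
      rw [this]; exact norm_add_le _ _
    rw [norm_mul] at habs
    simp only [Complex.norm_ofNat] at habs
    linarith
  linarith

omit hRsa hRR in
/-- scaling helper: unit-vector bound to general bound -/
lemma scale_bound (S : E →L[ℂ] E) {c : ℝ} (hc : ∀ x, ‖R (S x)‖ ≤ c * ‖R x‖)
    {β : ℝ} (hunit : ∀ y, ‖R y‖ = 1 → ‖R (S y)‖ ≤ β) :
    ∀ y, ‖R (S y)‖ ≤ β * ‖R y‖ := by
  intro y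
  rcases eq_or_lt_of_le (norm_nonneg (R y)) with h0 | hpos
  · have h := hc y
    rw [← h0] at h ⊢
    simp only [mul_zero] at h ⊢
    exact h
  · set r : ℝ := ‖R y‖
    have hx : ‖R (((r⁻¹ : ℝ) : ℂ) • y)‖ = 1 := by
      rw [map_smul, norm_smul]
      simp [r, abs_of_pos hpos]
      field_simp
      exact div_self hpos.ne'
    have h := hunit _ hx
    rw [map_smul, map_smul, norm_smul] at h
    simp only [Complex.norm_real, Real.norm_eq_abs, abs_of_pos (inv_pos.mpr hpos)] at h
    calc ‖R (S y)‖ = r * (r⁻¹ * ‖R (S y)‖) := by field_simp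
      _ ≤ r * β := by nlinarith
      _ = β * r := mul_comm _ _

omit hRsa hRR in
/-- transfer of pointwise bounds through the B-form relation -/
lemma transfer_bound (S1 S2 : E →L[ℂ] E)
    (hB : ∀ u w : E, (inner ℂ (R (S2 u)) (R w) : ℂ) = inner ℂ (R u) (R (S1 w)))
    {N : ℝ} (hN0 : 0 ≤ N) (hN : ∀ y, ‖R (S1 y)‖ ≤ N * ‖R y‖) :
    ∀ x, ‖R (S2 x)‖ ≤ N * ‖R x‖ := by
  intro x
  have hsq : (‖R (S2 x)‖ : ℝ) ^ 2 = RCLike.re (inner ℂ (R (S2 x)) (R (S2 x)) : ℂ) := by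
    rw [inner_self_eq_norm_sq]
  rw [hB x (S2 x)] at hsq
  have hle : (‖R (S2 x)‖ : ℝ) ^ 2 ≤ ‖R x‖ * (N * ‖R (S2 x)‖) := by
    rw [hsq]
    calc RCLike.re (inner ℂ (R x) (R (S1 (S2 x))) : ℂ)
        ≤ ‖(inner ℂ (R x) (R (S1 (S2 x))) : ℂ)‖ := RCLike.re_le_norm _
      _ ≤ ‖R x‖ * ‖R (S1 (S2 x))‖ := norm_inner_le_norm _ _
      _ ≤ ‖R x‖ * (N * ‖R (S2 x)‖) := by
          have := hN (S2 x)
          nlinarith [norm_nonneg (R x)]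
  rcases eq_or_lt_of_le (norm_nonneg (R (S2 x))) with h0 | hpos
  · rw [← h0]; positivity
  · nlinarith

end Framework2

section Chain
variable {E : Type*} [NormedAddCommGroup E] [InnerProductSpace ℂ E] [CompleteSpace E]

/-- alternating word of `T` and `S`. -/
noncomputable def altW (T S : E →L[ℂ] E) : ℕ → (E →L[ℂ] E)
  | 0 => 1
  | n + 1 => (if Even n then T else S) ∘L altW T S n

variable {A R : E →L[ℂ] E}
variable (hRsa : ∀ x y : E, (inner ℂ (R x) y : ℂ) = inner ℂ x (R y))
variable (hRR : ∀ x : E, R (R x) = A x)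
include hRsa hRR

/-- the `B`-form relation coming from `A ∘ S = T† ∘ A`. -/
lemma Brel {T S : E →L[ℂ] E} (h : A ∘L S = adjoint T ∘L A) :
    ∀ u w : E, (inner ℂ (R (S u)) (R w) : ℂ) = inner ℂ (R u) (R (T w)) := by
  intro u w
  have h1 : A (S u) = adjoint T (A u) := congrFun (congrArg DFunLike.coe h) u
  rw [← innerA hRsa hRR, h1, adjoint_inner_left, innerA hRsa hRR]

lemma chain_bound {T S : E →L[ℂ] E} (h : A ∘L S = adjoint T ∘L A) :
    ∀ x, ‖R (T x)‖ ≤ max ‖T‖ ‖S‖ * ‖R x‖ := by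
  have hB := Brel hRsa hRR h
  have step1 : ∀ y : E, ‖R (T y)‖ ^ 2 ≤ ‖R y‖ * ‖R (S (T y))‖ := by
    intro y
    have hsq : (‖R (T y)‖ : ℝ) ^ 2 = RCLike.re (inner ℂ (R (T y)) (R (T y)) : ℂ) := by
      rw [inner_self_eq_norm_sq]
    have hconj : (inner ℂ (R (T y)) (R (T y)) : ℂ) = inner ℂ (R y) (R (S (T y))) := by
      calc (inner ℂ (R (T y)) (R (T y)) : ℂ)
          = starRingEnd ℂ (inner ℂ (R (T y)) (R (T y)) : ℂ) := (inner_conj_symm _ _).symm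
        _ = starRingEnd ℂ (inner ℂ (R (S (T y))) (R y) : ℂ) := by rw [← hB (T y) y]
        _ = inner ℂ (R y) (R (S (T y))) := by rw [inner_conj_symm]
    rw [hsq, hconj]
    calc RCLike.re (inner ℂ (R y) (R (S (T y))) : ℂ)
        ≤ ‖(inner ℂ (R y) (R (S (T y))) : ℂ)‖ := RCLike.re_le_norm _
      _ ≤ ‖R y‖ * ‖R (S (T y))‖ := norm_inner_le_norm _ _
  have step2 : ∀ y : E, ‖R (S y)‖ ^ 2 ≤ ‖R y‖ * ‖R (T (S y))‖ := by
    intro y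
    have hsq : (‖R (S y)‖ : ℝ) ^ 2 = RCLike.re (inner ℂ (R (S y)) (R (S y)) : ℂ) := by
      rw [inner_self_eq_norm_sq]
    rw [hsq, hB y (S y)]
    calc RCLike.re (inner ℂ (R y) (R (T (S y))) : ℂ)
        ≤ ‖(inner ℂ (R y) (R (T (S y))) : ℂ)‖ := RCLike.re_le_norm _
      _ ≤ ‖R y‖ * ‖R (T (S y))‖ := norm_inner_le_norm _ _
  intro x
  set c : ℝ := max ‖T‖ ‖S‖ with hcdef
  have hc0 : 0 ≤ c := le_trans (norm_nonneg T) (le_max_left _ _)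
  set a : ℕ → ℝ := fun n => ‖R (altW T S n x)‖ with hadef
  have ha0 : ∀ n, 0 ≤ a n := fun n => norm_nonneg _
  have key : ∀ n, a (n + 1) ^ 2 ≤ a n * a (n + 2) := by
    intro n
    rcases Nat.even_or_odd n with hn | hn
    · have hodd : ¬ Even (n + 1) := by simp [Nat.even_add_one, hn]
      have e1 : altW T S (n+1) = T ∘L altW T S n := by rw [altW, if_pos hn]
      have e2 : altW T S (n+2) = S ∘L altW T S (n+1) := by rw [altW, if_neg hodd]
      have := step1 (altW T S n x)
      simpa [hadef, e1, e2, comp_apply] using this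
    · have hnotev : ¬ Even n := by simpa using hn
      have hev : Even (n + 1) := Nat.even_add_one.mpr hnotev
      have e1 : altW T S (n+1) = S ∘L altW T S n := by rw [altW, if_neg hnotev]
      have e2 : altW T S (n+2) = T ∘L altW T S (n+1) := by rw [altW, if_pos hev]
      have := step2 (altW T S n x)
      simpa [hadef, e1, e2, comp_apply] using this
  have hvbound : ∀ n, ‖altW T S n x‖ ≤ c ^ n * ‖x‖ := by
    intro n
    induction n with
    | zero => simp [altW]
    | succ n ih =>
      have : ‖altW T S (n+1) x‖ ≤ c * ‖altW T S n x‖ := by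
        rw [altW]
        by_cases hn : Even n
        · rw [if_pos hn]
          calc ‖(T ∘L altW T S n) x‖ ≤ ‖T‖ * ‖altW T S n x‖ := T.le_opNorm _
            _ ≤ c * ‖altW T S n x‖ :=
              mul_le_mul_of_nonneg_right (le_max_left _ _) (norm_nonneg _)
        · rw [if_neg hn]
          calc ‖(S ∘L altW T S n) x‖ ≤ ‖S‖ * ‖altW T S n x‖ := S.le_opNorm _
            _ ≤ c * ‖altW T S n x‖ :=
              mul_le_mul_of_nonneg_right (le_max_right _ _) (norm_nonneg _)
      calc ‖altW T S (n+1) x‖ ≤ c * ‖altW T S n x‖ := this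
        _ ≤ c * (c ^ n * ‖x‖) := mul_le_mul_of_nonneg_left ih hc0
        _ = c ^ (n+1) * ‖x‖ := by ring
  set K : ℝ := ‖R‖ * ‖x‖ with hKdef
  have habound : ∀ n, a n ≤ K * c ^ n := by
    intro n
    calc a n ≤ ‖R‖ * ‖altW T S n x‖ := R.le_opNorm _
      _ ≤ ‖R‖ * (c ^ n * ‖x‖) := mul_le_mul_of_nonneg_left (hvbound n) (norm_nonneg R)
      _ = K * c ^ n := by ring
  have ha1 : a 1 = ‖R (T x)‖ := by
    simp [hadef, altW]
  have ha0x : a 0 = ‖R x‖ := by simp [hadef, altW]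
  rw [← ha1, ← ha0x]
  by_cases ha0z : a 0 = 0
  · have h1 := key 0
    rw [ha0z] at h1
    simp only [zero_mul] at h1
    have : a 1 = 0 := by nlinarith [ha0 1]
    rw [this, ha0z, mul_zero]
  · have ha0pos : 0 < a 0 := lt_of_le_of_ne (ha0 0) (Ne.symm ha0z)
    by_cases hcz : c = 0
    · have hT0 : T = 0 := by
        have : ‖T‖ ≤ 0 := by rw [← hcz]; exact le_max_left _ _
        exact norm_le_zero_iff.mp this
      have : a 1 = 0 := by rw [ha1, hT0]; simp
      rw [this, hcz, zero_mul]
    · have hcpos : 0 < c := lt_of_le_of_ne hc0 (Ne.symm hcz)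
      by_contra hcon
      push_neg at hcon
      set q : ℝ := a 1 / (c * a 0) with hqdef
      have hq1 : 1 < q := (one_lt_div (by positivity)).mpr hcon
      have claim : ∀ n, 0 < a n ∧ q * c * a n ≤ a (n + 1) := by
        intro n
        induction n with
        | zero =>
          refine ⟨ha0pos, ?_⟩
          have : q * c * a 0 = a 1 := by
            rw [hqdef]; field_simp
          exact this.le
        | succ n ih =>
          obtain ⟨hpos, hle⟩ := ih
          have hpos1 : 0 < a (n + 1) :=
            lt_of_lt_of_le (by positivity) hle
          refine ⟨hpos1, ?_⟩
          have hkey := key n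
          nlinarith [mul_le_mul_of_nonneg_right hle (ha0 (n+2)),
            mul_le_mul_of_nonneg_left hkey (le_of_lt (mul_pos (lt_trans one_pos hq1) hcpos))]
      have geom : ∀ n, (q * c) ^ n * a 0 ≤ a n := by
        intro n
        induction n with
        | zero => simp
        | succ n ih =>
          calc (q * c) ^ (n+1) * a 0 = (q * c) * ((q * c) ^ n * a 0) := by ring
            _ ≤ (q * c) * a n :=
              mul_le_mul_of_nonneg_left ih (by positivity)
            _ ≤ a (n + 1) := (claim n).2
      have hqb : ∀ n : ℕ, q ^ n ≤ K / a 0 := by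
        intro n
        have h1 : (q * c) ^ n * a 0 ≤ K * c ^ n := le_trans (geom n) (habound n)
        rw [mul_pow] at h1
        have hcn : (0:ℝ) < c ^ n := by positivity
        have h2 : (q ^ n * a 0) * c ^ n ≤ K * c ^ n := by nlinarith [h1]
        have h3 : q ^ n * a 0 ≤ K := le_of_mul_le_mul_right h2 hcn
        rw [le_div_iff₀ ha0pos]
        exact h3
      obtain ⟨n, hn⟩ := pow_unbounded_of_one_lt (K / a 0) hq1
      exact absurd (hqb n) (not_le.mpr hn)
end Chain

section Prod
variable {H : Type*} [NormedAddCommGroup H] [InnerProductSpace ℂ H]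

lemma blk_fst (P Q R S : H →L[ℂ] H) (z : WithLp 2 (H × H)) :
    (blk P Q R S z).fst = P z.fst + Q z.snd := rfl

lemma blk_snd (P Q R S : H →L[ℂ] H) (z : WithLp 2 (H × H)) :
    (blk P Q R S z).snd = R z.fst + S z.snd := rfl

lemma norm_eq_of_sq_eq {a b : ℝ} (h : a ^ 2 = b ^ 2) (ha : 0 ≤ a) (hb : 0 ≤ b) : a = b := by
  nlinarith

lemma prodR_sa {R : H →L[ℂ] H} (hRsa : ∀ x y : H, (inner ℂ (R x) y : ℂ) = inner ℂ x (R y)) :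
    ∀ z w : WithLp 2 (H × H),
      (inner ℂ (blk R 0 0 R z) w : ℂ) = inner ℂ z (blk R 0 0 R w) := by
  intro z w
  simp only [WithLp.prod_inner_apply, WithLp.ofLp_fst, WithLp.ofLp_snd, blk_fst, blk_snd, zero_apply, add_zero, zero_add, hRsa]

lemma prodR_sq {A R : H →L[ℂ] H} (hRR : ∀ x : H, R (R x) = A x) :
    ∀ z : WithLp 2 (H × H), blk R 0 0 R (blk R 0 0 R z) = AA A z := by
  intro z
  have h1 : (blk R 0 0 R (blk R 0 0 R z)).fst = (AA A z).fst := by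
    simp only [blk_fst, blk_snd, AA, zero_apply, add_zero, zero_add, hRR]
  have h2 : (blk R 0 0 R (blk R 0 0 R z)).snd = (AA A z).snd := by
    simp only [blk_fst, blk_snd, AA, zero_apply, add_zero, zero_add, hRR]
  exact (WithLp.equiv 2 (H × H)).injective (Prod.ext h1 h2)

lemma prod_norm_sq (z : WithLp 2 (H × H)) : ‖z‖ ^ 2 = ‖z.fst‖ ^ 2 + ‖z.snd‖ ^ 2 :=
  WithLp.prod_norm_sq_eq_of_L2 z

end Prod

theorem stmt12 {H : Type*} [NormedAddCommGroup H] [InnerProductSpace ℂ H] [CompleteSpace H]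
    (A : H →L[ℂ] H) (hA : A.IsPositive)
    (P Q Qs : H →L[ℂ] H) (hP : ∃ Ps, IsReducedAdjoint A P Ps)
    (hQ : IsReducedAdjoint A Q Qs) :
    0 ≤ max ((opNormA A (P + Q)) ^ 2) ((opNormA A (P - Q)) ^ 2) -
        2 * wA A (P ∘L Qs) ∧
      (1 / 2) * Real.sqrt (max ((opNormA A (P + Q)) ^ 2) ((opNormA A (P - Q)) ^ 2) -
        2 * wA A (P ∘L Qs)) ≤ wA (AA A) (blk P Q 0 0) := by
  classical
  obtain ⟨Ps, hP1, -⟩ := hP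
  obtain ⟨hQ1, -⟩ := hQ
  have hApos : (0 : H →L[ℂ] H) ≤ A := (ContinuousLinearMap.nonneg_iff_isPositive A).2 hA
  set R : H →L[ℂ] H := CFC.sqrt A with hRdef
  have hRpos : (0 : H →L[ℂ] H) ≤ R := CFC.sqrt_nonneg A
  have hRsa : ∀ x y : H, (inner ℂ (R x) y : ℂ) = inner ℂ x (R y) := by
    have h := ((ContinuousLinearMap.nonneg_iff_isPositive R).1 hRpos).isSelfAdjoint
    exact fun x y => (isSelfAdjoint_iff_isSymmetric.mp h) x y
  have hRR : ∀ x, R (R x) = A x := by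
    intro x
    have h : R * R = A := CFC.sqrt_mul_sqrt_self A hApos
    calc R (R x) = (R * R) x := rfl
      _ = A x := by rw [h]
  have hAadj : ContinuousLinearMap.adjoint A = A := by
    rw [← ContinuousLinearMap.star_eq_adjoint]; exact hA.isSelfAdjoint
  have flip : ∀ T Ts : H →L[ℂ] H, A ∘L Ts = adjoint T ∘L A → A ∘L T = adjoint Ts ∘L A := by
    intro T Ts hrel
    have h := congrArg (fun f => ContinuousLinearMap.adjoint f) hrel
    simp only [ContinuousLinearMap.adjoint_comp, hAadj,
      ContinuousLinearMap.adjoint_adjoint] at h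
    exact h.symm
  have hPflip := flip P Ps hP1
  have hQflip := flip Q Qs hQ1
  -- crude bounds
  set cP : ℝ := max ‖P‖ ‖Ps‖ with hcPdef
  set cQ : ℝ := max ‖Q‖ ‖Qs‖ with hcQdef
  set cPs : ℝ := max ‖Ps‖ ‖P‖ with hcPsdef
  set cQs : ℝ := max ‖Qs‖ ‖Q‖ with hcQsdef
  have hcP0 : 0 ≤ cP := le_trans (norm_nonneg P) (le_max_left _ _)
  have hcQ0 : 0 ≤ cQ := le_trans (norm_nonneg Q) (le_max_left _ _)
  have hcPs0 : 0 ≤ cPs := le_trans (norm_nonneg Ps) (le_max_left _ _)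
  have hcQs0 : 0 ≤ cQs := le_trans (norm_nonneg Qs) (le_max_left _ _)
  have hPbd : ∀ x, ‖R (P x)‖ ≤ cP * ‖R x‖ := chain_bound hRsa hRR hP1
  have hQbd : ∀ x, ‖R (Q x)‖ ≤ cQ * ‖R x‖ := chain_bound hRsa hRR hQ1
  have hPsbd : ∀ x, ‖R (Ps x)‖ ≤ cPs * ‖R x‖ := chain_bound hRsa hRR hPflip
  have hQsbd : ∀ x, ‖R (Qs x)‖ ≤ cQs * ‖R x‖ := chain_bound hRsa hRR hQflip
  have hPQsbd : ∀ x, ‖R ((P ∘L Qs) x)‖ ≤ (cP * cQs) * ‖R x‖ := by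
    intro x
    calc ‖R (P (Qs x))‖ ≤ cP * ‖R (Qs x)‖ := hPbd _
      _ ≤ cP * (cQs * ‖R x‖) := by
          have := hQsbd x; nlinarith
      _ = (cP * cQs) * ‖R x‖ := by ring
  have hPpQbd : ∀ x, ‖R ((P + Q) x)‖ ≤ (cP + cQ) * ‖R x‖ := by
    intro x
    rw [ContinuousLinearMap.add_apply, map_add]
    calc ‖R (P x) + R (Q x)‖ ≤ ‖R (P x)‖ + ‖R (Q x)‖ := norm_add_le _ _
      _ ≤ (cP + cQ) * ‖R x‖ := by have := hPbd x; have := hQbd x; nlinarith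
  have hPmQbd : ∀ x, ‖R ((P - Q) x)‖ ≤ (cP + cQ) * ‖R x‖ := by
    intro x
    rw [ContinuousLinearMap.sub_apply, map_sub]
    calc ‖R (P x) - R (Q x)‖ ≤ ‖R (P x)‖ + ‖R (Q x)‖ := norm_sub_le _ _
      _ ≤ (cP + cQ) * ‖R x‖ := by have := hPbd x; have := hQbd x; nlinarith
  have hPspQsbd : ∀ x, ‖R ((Ps + Qs) x)‖ ≤ (cPs + cQs) * ‖R x‖ := by
    intro x
    rw [ContinuousLinearMap.add_apply, map_add]
    calc ‖R (Ps x) + R (Qs x)‖ ≤ ‖R (Ps x)‖ + ‖R (Qs x)‖ := norm_add_le _ _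
      _ ≤ (cPs + cQs) * ‖R x‖ := by have := hPsbd x; have := hQsbd x; nlinarith
  have hPsmQsbd : ∀ x, ‖R ((Ps - Qs) x)‖ ≤ (cPs + cQs) * ‖R x‖ := by
    intro x
    rw [ContinuousLinearMap.sub_apply, map_sub]
    calc ‖R (Ps x) - R (Qs x)‖ ≤ ‖R (Ps x)‖ + ‖R (Qs x)‖ := norm_sub_le _ _
      _ ≤ (cPs + cQs) * ‖R x‖ := by have := hPsbd x; have := hQsbd x; nlinarith
  -- cross identity
  have hcross : ∀ y : H, (inner ℂ (R ((P ∘L Qs) y)) (R y) : ℂ) = inner ℂ (R (Qs y)) (R (Ps y)) := by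
    intro y
    have h2 : A (P (Qs y)) = ContinuousLinearMap.adjoint Ps (A (Qs y)) :=
      congrFun (congrArg DFunLike.coe hPflip) (Qs y)
    have h1 : (P ∘L Qs) y = P (Qs y) := rfl
    rw [h1, ← innerA hRsa hRR, h2, adjoint_inner_left, innerA hRsa hRR]
  set W : ℝ := wA (AA A) (blk P Q 0 0) with hWdef
  set w : ℝ := wA A (P ∘L Qs) with hwdef
  have hW0 : 0 ≤ W := wA_nonneg _ _
  have hw0 : 0 ≤ w := wA_nonneg _ _
  -- product framework
  have hRsa2 := prodR_sa (R := R) hRsa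
  have hRR2 := prodR_sq (A := A) (R := R) hRR
  have hR2normsq : ∀ z : WithLp 2 (H × H),
      ‖blk R 0 0 R z‖ ^ 2 = ‖R z.fst‖ ^ 2 + ‖R z.snd‖ ^ 2 := by
    intro z
    rw [prod_norm_sq, blk_fst, blk_snd]
    simp
  have hTbd : ∀ z : WithLp 2 (H × H),
      ‖blk R 0 0 R (blk P Q 0 0 z)‖ ≤ (cP + cQ) * ‖blk R 0 0 R z‖ := by
    intro z
    have hfst : (blk R 0 0 R (blk P Q 0 0 z)).fst = R (P z.fst) + R (Q z.snd) := by
      rw [blk_fst, blk_fst, blk_snd]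
      simp [map_add]
    have hsnd : (blk R 0 0 R (blk P Q 0 0 z)).snd = 0 := by
      rw [blk_snd, blk_fst, blk_snd]
      simp
    have h1 : ‖blk R 0 0 R (blk P Q 0 0 z)‖ = ‖R (P z.fst) + R (Q z.snd)‖ := by
      apply norm_eq_of_sq_eq _ (norm_nonneg _) (norm_nonneg _)
      rw [prod_norm_sq, hfst, hsnd]
      simp
    have hsqz := hR2normsq z
    have hz1 : ‖R z.fst‖ ≤ ‖blk R 0 0 R z‖ := by nlinarith [norm_nonneg (blk R 0 0 R z), norm_nonneg (R z.fst), norm_nonneg (R z.snd)]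
    have hz2 : ‖R z.snd‖ ≤ ‖blk R 0 0 R z‖ := by nlinarith [norm_nonneg (blk R 0 0 R z), norm_nonneg (R z.fst), norm_nonneg (R z.snd)]
    rw [h1]
    calc ‖R (P z.fst) + R (Q z.snd)‖ ≤ ‖R (P z.fst)‖ + ‖R (Q z.snd)‖ := norm_add_le _ _
      _ ≤ (cP + cQ) * ‖blk R 0 0 R z‖ := by
          have h3 := hPbd z.fst; have h4 := hQbd z.snd
          nlinarith [norm_nonneg (R z.fst), norm_nonneg (R z.snd)]
  -- the key product-space bound
  have hL9 : ∀ x : H, ‖R x‖ = 1 →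
      ‖R (Ps x)‖ ^ 2 + ‖R (Qs x)‖ ^ 2 ≤ (2 * W) ^ 2 := by
    intro x hx
    by_cases hz : ‖R (Ps x)‖ ^ 2 + ‖R (Qs x)‖ ^ 2 = 0
    · rw [hz]; positivity
    · set u : WithLp 2 (H × H) := (WithLp.equiv 2 (H × H)).symm (Ps x, Qs x) with hu
      set e : WithLp 2 (H × H) := (WithLp.equiv 2 (H × H)).symm (x, 0) with he
      have hufst : u.fst = Ps x := rfl
      have husnd : u.snd = Qs x := rfl
      have hefst : e.fst = x := rfl
      have hesnd : e.snd = (0 : H) := rfl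
      set r : ℝ := ‖blk R 0 0 R u‖ with hr
      have hrsq : r ^ 2 = ‖R (Ps x)‖ ^ 2 + ‖R (Qs x)‖ ^ 2 := by
        rw [hr, hR2normsq, hufst, husnd]
      have hrpos : 0 < r := by
        have h0 : (0:ℝ) ≤ r := norm_nonneg _
        rcases h0.lt_or_eq with h | h
        · exact h
        · exfalso; apply hz; rw [← hrsq, ← h]; ring
      have henorm : ‖blk R 0 0 R e‖ = 1 := by
        apply norm_eq_of_sq_eq _ (norm_nonneg _) zero_le_one
        rw [hR2normsq, hefst, hesnd]
        simp [hx]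
      set v : WithLp 2 (H × H) := ((r⁻¹ : ℝ) : ℂ) • u with hv
      have hvnorm : ‖blk R 0 0 R v‖ = 1 := by
        rw [hv, map_smul, norm_smul]
        simp only [Complex.norm_real, Real.norm_eq_abs, abs_of_pos (inv_pos.mpr hrpos)]
        rw [← hr]
        field_simp
      have hpb := polar_bound hRsa2 hRR2 (blk P Q 0 0) hTbd v e hvnorm henorm
      have hTu_fst : (blk P Q 0 0 u).fst = P (Ps x) + Q (Qs x) := by
        rw [blk_fst, hufst, husnd]
      have hTu_snd : (blk P Q 0 0 u).snd = 0 := by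
        rw [blk_snd, hufst, husnd]; simp
      have hinner_u : (inner ℂ (blk R 0 0 R (blk P Q 0 0 u)) (blk R 0 0 R e) : ℂ)
          = ((‖R (Ps x)‖ ^ 2 + ‖R (Qs x)‖ ^ 2 : ℝ) : ℂ) := by
        rw [WithLp.prod_inner_apply]
        have c1 : (blk R 0 0 R (blk P Q 0 0 u)).fst = R (P (Ps x)) + R (Q (Qs x)) := by
          rw [blk_fst, hTu_fst, hTu_snd]; simp [map_add]
        have c2 : (blk R 0 0 R (blk P Q 0 0 u)).snd = 0 := by
          rw [blk_snd, hTu_fst, hTu_snd]; simp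
        have d1 : (blk R 0 0 R e).fst = R x := by rw [blk_fst, hefst, hesnd]; simp
        have d2 : (blk R 0 0 R e).snd = 0 := by rw [blk_snd, hefst, hesnd]; simp
        simp only [WithLp.ofLp_fst, WithLp.ofLp_snd]
        rw [c1, c2, d1, d2, inner_add_left]
        have e1 : (inner ℂ (R (P (Ps x))) (R x) : ℂ) = ((‖R (Ps x)‖ ^ 2 : ℝ) : ℂ) := by
          have h2 : A (P (Ps x)) = ContinuousLinearMap.adjoint Ps (A (Ps x)) :=
            congrFun (congrArg DFunLike.coe hPflip) (Ps x)
          rw [← innerA hRsa hRR, h2, adjoint_inner_left, innerA hRsa hRR,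
            inner_self_eq_norm_sq_to_K]
          norm_cast
        have e2 : (inner ℂ (R (Q (Qs x))) (R x) : ℂ) = ((‖R (Qs x)‖ ^ 2 : ℝ) : ℂ) := by
          have h2 : A (Q (Qs x)) = ContinuousLinearMap.adjoint Qs (A (Qs x)) :=
            congrFun (congrArg DFunLike.coe hQflip) (Qs x)
          rw [← innerA hRsa hRR, h2, adjoint_inner_left, innerA hRsa hRR,
            inner_self_eq_norm_sq_to_K]
          norm_cast
        rw [e1, e2, inner_zero_left]
        push_cast
        ring
      have hinner_v : (inner ℂ (blk R 0 0 R (blk P Q 0 0 v)) (blk R 0 0 R e) : ℂ)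
          = ((r : ℝ) : ℂ) := by
        rw [hv, map_smul, map_smul, inner_smul_left, hinner_u, Complex.conj_ofReal,
          ← Complex.ofReal_mul]
        congr 1
        rw [← hrsq]
        field_simp
      rw [hinner_v, Complex.norm_real, Real.norm_eq_abs, abs_of_pos hrpos] at hpb
      calc ‖R (Ps x)‖ ^ 2 + ‖R (Qs x)‖ ^ 2 = r ^ 2 := hrsq.symm
        _ ≤ (2 * W) ^ 2 := by nlinarith
  -- opNorm facts
  have opN0 : ∀ S : H →L[ℂ] H, 0 ≤ opNormA A S := fun S =>
    Real.sSup_nonneg (by rintro c ⟨x, -, rfl⟩; exact Real.sqrt_nonneg _)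
  set Np : ℝ := opNormA A (P + Q) with hNpdef
  set Nm : ℝ := opNormA A (P - Q) with hNmdef
  set M : ℝ := max (Np ^ 2) (Nm ^ 2) with hMdef
  have hNp0 : 0 ≤ Np := opN0 _
  have hNm0 : 0 ≤ Nm := opN0 _
  have hM0 : 0 ≤ M := le_trans (sq_nonneg Np) (le_max_left _ _)
  have elt_le_opN : ∀ (S : H →L[ℂ] H) (c : ℝ), (∀ x, ‖R (S x)‖ ≤ c * ‖R x‖) →
      ∀ y, ‖R y‖ = 1 → ‖R (S y)‖ ≤ opNormA A S := by
    intro S c hc y hy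
    apply le_csSup
    · refine ⟨c, ?_⟩
      rintro t ⟨x, hx, rfl⟩
      rw [vnorm_eq hRsa hRR] at hx
      rw [vnorm_eq hRsa hRR]
      calc ‖R (S x)‖ ≤ c * ‖R x‖ := hc x
        _ = c := by rw [hx, mul_one]
    · exact ⟨y, by rw [vnorm_eq hRsa hRR]; exact hy, (vnorm_eq hRsa hRR _).symm⟩
  have opN_le : ∀ (S : H →L[ℂ] H) (β : ℝ), 0 ≤ β → (∀ y, ‖R y‖ = 1 → ‖R (S y)‖ ≤ β) →
      opNormA A S ≤ β := by
    intro S β hβ h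
    apply Real.sSup_le _ hβ
    rintro t ⟨x, hx, rfl⟩
    rw [vnorm_eq hRsa hRR] at hx
    rw [vnorm_eq hRsa hRR]
    exact h x hx
  -- operator relations for sums/differences
  have hadj_add : ContinuousLinearMap.adjoint (P + Q)
      = ContinuousLinearMap.adjoint P + ContinuousLinearMap.adjoint Q := map_add _ _ _
  have hadj_sub : ContinuousLinearMap.adjoint (P - Q)
      = ContinuousLinearMap.adjoint P - ContinuousLinearMap.adjoint Q := map_sub _ _ _
  have hadj_adds : ContinuousLinearMap.adjoint (Ps + Qs)
      = ContinuousLinearMap.adjoint Ps + ContinuousLinearMap.adjoint Qs := map_add _ _ _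
  have hadj_subs : ContinuousLinearMap.adjoint (Ps - Qs)
      = ContinuousLinearMap.adjoint Ps - ContinuousLinearMap.adjoint Qs := map_sub _ _ _
  have hadd1 : A ∘L (Ps + Qs) = adjoint (P + Q) ∘L A := by
    rw [hadj_add]
    calc A ∘L (Ps + Qs) = A ∘L Ps + A ∘L Qs := by rw [comp_add]
      _ = adjoint P ∘L A + adjoint Q ∘L A := by rw [hP1, hQ1]
      _ = (adjoint P + adjoint Q) ∘L A := by rw [add_comp]
  have hadd2 : A ∘L (P + Q) = adjoint (Ps + Qs) ∘L A := by
    rw [hadj_adds]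
    calc A ∘L (P + Q) = A ∘L P + A ∘L Q := by rw [comp_add]
      _ = adjoint Ps ∘L A + adjoint Qs ∘L A := by rw [hPflip, hQflip]
      _ = (adjoint Ps + adjoint Qs) ∘L A := by rw [add_comp]
  have hsub1 : A ∘L (Ps - Qs) = adjoint (P - Q) ∘L A := by
    rw [hadj_sub]
    calc A ∘L (Ps - Qs) = A ∘L Ps - A ∘L Qs := by rw [comp_sub]
      _ = adjoint P ∘L A - adjoint Q ∘L A := by rw [hP1, hQ1]
      _ = (adjoint P - adjoint Q) ∘L A := by rw [sub_comp]
  have hsub2 : A ∘L (P - Q) = adjoint (Ps - Qs) ∘L A := by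
    rw [hadj_subs]
    calc A ∘L (P - Q) = A ∘L P - A ∘L Q := by rw [comp_sub]
      _ = adjoint Ps ∘L A - adjoint Qs ∘L A := by rw [hPflip, hQflip]
      _ = (adjoint Ps - adjoint Qs) ∘L A := by rw [sub_comp]
  have hB_PQ := Brel hRsa hRR hadd2
  have hB_PsQs := Brel hRsa hRR hadd1
  have hB_PQm := Brel hRsa hRR hsub2
  have hB_PsQsm := Brel hRsa hRR hsub1
  -- Ps + Qs bounded by Np etc.
  have hPQ_opbd : ∀ y, ‖R ((P + Q) y)‖ ≤ Np * ‖R y‖ :=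
    scale_bound (P + Q) hPpQbd (fun y hy => elt_le_opN (P + Q) _ hPpQbd y hy)
  have hPQ_opbdm : ∀ y, ‖R ((P - Q) y)‖ ≤ Nm * ‖R y‖ :=
    scale_bound (P - Q) hPmQbd (fun y hy => elt_le_opN (P - Q) _ hPmQbd y hy)
  have hPsQs_le_Np : ∀ y, ‖R ((Ps + Qs) y)‖ ≤ Np * ‖R y‖ :=
    transfer_bound (P + Q) (Ps + Qs) hB_PsQs hNp0 hPQ_opbd
  have hPsQs_le_Nm : ∀ y, ‖R ((Ps - Qs) y)‖ ≤ Nm * ‖R y‖ :=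
    transfer_bound (P - Q) (Ps - Qs) hB_PsQsm hNm0 hPQ_opbdm
  -- conjunct 1 : w ≤ M / 2
  have hw_le : w ≤ M / 2 := by
    rw [hwdef]
    apply Real.sSup_le _ (by linarith)
    rintro t ⟨x, hx, rfl⟩
    rw [vnorm_eq hRsa hRR] at hx
    rw [innerA hRsa hRR, hcross x]
    have hab : ‖(inner ℂ (R (Qs x)) (R (Ps x)) : ℂ)‖ ≤ ‖R (Qs x)‖ * ‖R (Ps x)‖ := by
      exact norm_inner_le_norm _ _
    have h1 : ‖R (Ps x) + R (Qs x)‖ ≤ Np := by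
      have h := hPsQs_le_Np x
      rw [hx, mul_one, ContinuousLinearMap.add_apply, map_add] at h
      exact h
    have h2 : ‖R (Ps x) - R (Qs x)‖ ≤ Nm := by
      have h := hPsQs_le_Nm x
      rw [hx, mul_one, ContinuousLinearMap.sub_apply, map_sub] at h
      exact h
    have hpar := parallelogram_law_with_norm ℂ (R (Ps x)) (R (Qs x))
    have hNp2 : Np ^ 2 ≤ M := le_max_left _ _
    have hNm2 : Nm ^ 2 ≤ M := le_max_right _ _
    nlinarith [mul_self_le_mul_self (norm_nonneg (R (Ps x) + R (Qs x))) h1,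
      mul_self_le_mul_self (norm_nonneg (R (Ps x) - R (Qs x))) h2,
      sq_nonneg (‖R (Ps x)‖ - ‖R (Qs x)‖), hab,
      norm_nonneg (R (Ps x)), norm_nonneg (R (Qs x))]
  -- conjunct 2
  set β : ℝ := Real.sqrt (4 * W ^ 2 + 2 * w) with hβdef
  have hβ0 : 0 ≤ β := Real.sqrt_nonneg _
  have hβsq : β ^ 2 = 4 * W ^ 2 + 2 * w := Real.sq_sqrt (by positivity)
  have hw_elt : ∀ y, ‖R y‖ = 1 →
      ‖(inner ℂ (R (Ps y)) (R (Qs y)) : ℂ)‖ ≤ w := by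
    intro y hy
    have h := wA_le_elt hRsa hRR (P ∘L Qs) hPQsbd y hy
    rw [hcross y] at h
    rw [show (inner ℂ (R (Ps y)) (R (Qs y)) : ℂ)
        = starRingEnd ℂ (inner ℂ (R (Qs y)) (R (Ps y)) : ℂ) from (inner_conj_symm _ _).symm,
      Complex.norm_conj]
    exact h
  have hKey3p : ∀ y, ‖R y‖ = 1 → ‖R ((Ps + Qs) y)‖ ≤ β := by
    intro y hy
    have hss := hL9 y hy
    have hcr := hw_elt y hy
    have hre : RCLike.re (inner ℂ (R (Ps y)) (R (Qs y)) : ℂ) ≤ w :=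
      le_trans (RCLike.re_le_norm _) (by exact hcr)
    have hexp : ‖R ((Ps + Qs) y)‖ ^ 2 = ‖R (Ps y)‖ ^ 2
        + 2 * RCLike.re (inner ℂ (R (Ps y)) (R (Qs y)) : ℂ) + ‖R (Qs y)‖ ^ 2 := by
      rw [ContinuousLinearMap.add_apply, map_add]
      exact norm_add_sq _ _
    have hle : ‖R ((Ps + Qs) y)‖ ^ 2 ≤ β ^ 2 := by
      rw [hexp, hβsq]; nlinarith
    nlinarith [norm_nonneg (R ((Ps + Qs) y))]
  have hKey3m : ∀ y, ‖R y‖ = 1 → ‖R ((Ps - Qs) y)‖ ≤ β := by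
    intro y hy
    have hss := hL9 y hy
    have hcr := hw_elt y hy
    have hre : -w ≤ RCLike.re (inner ℂ (R (Ps y)) (R (Qs y)) : ℂ) := by
      have h1 : |RCLike.re (inner ℂ (R (Ps y)) (R (Qs y)) : ℂ)|
          ≤ ‖(inner ℂ (R (Ps y)) (R (Qs y)) : ℂ)‖ := RCLike.abs_re_le_norm _
      have := abs_le.mp (le_trans h1 hcr)
      linarith [this.1]
    have hexp : ‖R ((Ps - Qs) y)‖ ^ 2 = ‖R (Ps y)‖ ^ 2
        - 2 * RCLike.re (inner ℂ (R (Ps y)) (R (Qs y)) : ℂ) + ‖R (Qs y)‖ ^ 2 := by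
      rw [ContinuousLinearMap.sub_apply, map_sub]
      exact norm_sub_sq _ _
    have hle : ‖R ((Ps - Qs) y)‖ ^ 2 ≤ β ^ 2 := by
      rw [hexp, hβsq]; nlinarith
    nlinarith [norm_nonneg (R ((Ps - Qs) y))]
  have hPQ_le_β : ∀ x, ‖R ((P + Q) x)‖ ≤ β * ‖R x‖ :=
    transfer_bound (Ps + Qs) (P + Q) hB_PQ hβ0 (scale_bound (Ps + Qs) hPspQsbd hKey3p)
  have hPQ_le_βm : ∀ x, ‖R ((P - Q) x)‖ ≤ β * ‖R x‖ :=
    transfer_bound (Ps - Qs) (P - Q) hB_PQm hβ0 (scale_bound (Ps - Qs) hPsmQsbd hKey3m)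
  have hNp_le : Np ≤ β := opN_le (P + Q) β hβ0 (fun y hy => by
    have h := hPQ_le_β y; rw [hy, mul_one] at h; exact h)
  have hNm_le : Nm ≤ β := opN_le (P - Q) β hβ0 (fun y hy => by
    have h := hPQ_le_βm y; rw [hy, mul_one] at h; exact h)
  have hM_le : M ≤ 4 * W ^ 2 + 2 * w := by
    rw [← hβsq, hMdef]
    apply max_le
    · exact pow_le_pow_left₀ hNp0 hNp_le 2
    · exact pow_le_pow_left₀ hNm0 hNm_le 2
  constructor
  · linarith
  · have h1 : M - 2 * w ≤ 4 * W ^ 2 := by linarith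
    have h2 : Real.sqrt (M - 2 * w) ≤ Real.sqrt (4 * W ^ 2) := Real.sqrt_le_sqrt h1
    have h3 : Real.sqrt (4 * W ^ 2) = 2 * W := by
      rw [show (4 * W ^ 2 : ℝ) = (2 * W) ^ 2 by ring, Real.sqrt_sq (by linarith)]
    rw [h3] at h2
    linarith
end

section
/- Let T, S ∈ B(H) with T ≥_A 0 and S ≥_A 0 (i.e., AT ≥ 0 and AS ≥ 0). Then ‖T − S‖_A ≤ max{‖T‖_A, ‖S‖_A}. -/
set_option maxHeartbeats 1000000
set_option synthInstance.maxHeartbeats 1000000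

open ContinuousLinearMap

open scoped InnerProductSpace

section Aux

variable {H : Type*} [NormedAddCommGroup H] [InnerProductSpace ℂ H] [CompleteSpace H]

/-- Reid's inequality: if `B ≥ 0` and `B C = C* B` then `re⟪B C z, z⟫ ≤ ‖C‖ re⟪B z, z⟫`. -/
private lemma reid_aux (B C : H →L[ℂ] H) (hB : B.IsPositive)
    (hBC : ∀ x, B (C x) = (ContinuousLinearMap.adjoint C) (B x)) (z : H) :
    RCLike.re (inner ℂ (B (C z)) z : ℂ) ≤ ‖C‖ * RCLike.re (inner ℂ (B z) z : ℂ) := by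
  have h0 : (0 : H →L[ℂ] H) ≤ B := (nonneg_iff_isPositive B).mpr hB
  set R := CFC.sqrt B with hRdef
  have hRR : R * R = B := CFC.sqrt_mul_sqrt_self B h0
  have hRsa : ContinuousLinearMap.adjoint R = R := by
    rw [← star_eq_adjoint]
    exact ((nonneg_iff_isPositive R).mp (CFC.sqrt_nonneg B)).isSelfAdjoint
  have hBapp : ∀ u : H, B u = R (R u) := by
    intro u; rw [← hRR]; rfl
  have innerR : ∀ u v : H, (inner ℂ (B u) v : ℂ) = inner ℂ (R u) (R v) := by
    intro u v
    have h := adjoint_inner_left R v (R u)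
    rw [hRsa] at h
    rw [hBapp u, h]
  -- pointwise commutation with powers
  have comm : ∀ (n : ℕ) (x : H), B ((C ^ n) x) = ((ContinuousLinearMap.adjoint C) ^ n) (B x) := by
    intro n
    induction n with
    | zero => intro x; simp
    | succ n ih =>
      intro x
      rw [pow_succ, ContinuousLinearMap.mul_apply, ih (C x), hBC x, pow_succ, ContinuousLinearMap.mul_apply]
  have adj_pow : ∀ (n : ℕ), ContinuousLinearMap.adjoint (C ^ n)
      = (ContinuousLinearMap.adjoint C) ^ n := by
    intro n
    rw [← star_eq_adjoint, ← star_eq_adjoint, star_pow]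
  set q : ℝ := RCLike.re (inner ℂ (B z) z : ℂ) with hqdef
  have hq : q = ‖R z‖ ^ 2 := by
    rw [hqdef, innerR]
    exact inner_self_eq_norm_sq (R z)
  have qnn : 0 ≤ q := by rw [hq]; positivity
  set s : ℕ → ℝ := fun n => RCLike.re (inner ℂ (B ((C ^ (2 ^ n)) z)) z : ℂ) with hsdef
  -- symmetry of the real part of the B-form
  have re_sym : ∀ u v : H, RCLike.re (inner ℂ (B u) v : ℂ) = RCLike.re (inner ℂ (B v) u : ℂ) := by
    intro u v
    rw [innerR, innerR, ← inner_conj_symm]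
    exact (RCLike.conj_re _)
  -- s (n+1) is a square
  have hsq : ∀ n : ℕ, s (n + 1) = ‖R ((C ^ (2 ^ n)) z)‖ ^ 2 := by
    intro n
    have e2 : (inner ℂ (B z) ((C ^ (2 ^ (n + 1))) z) : ℂ)
        = inner ℂ (B ((C ^ (2 ^ n)) z)) ((C ^ (2 ^ n)) z) := by
      have e3 : (C ^ (2 ^ (n + 1))) z = (C ^ (2 ^ n)) ((C ^ (2 ^ n)) z) := by
        rw [← ContinuousLinearMap.mul_apply, ← pow_add]
        congr 2
        rw [pow_succ]
        ring
      rw [e3, ← adjoint_inner_left (C ^ (2 ^ n)), adj_pow, ← comm]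
    have e4 : s (n + 1) = RCLike.re (inner ℂ (B ((C ^ (2 ^ n)) z)) ((C ^ (2 ^ n)) z) : ℂ) := by
      simp only [hsdef]
      rw [re_sym, e2]
    rw [e4, innerR, inner_self_eq_norm_sq]
  -- the basic Cauchy–Schwarz step
  have step : ∀ n : ℕ, s n ≤ ‖R ((C ^ (2 ^ n)) z)‖ * ‖R z‖ := by
    intro n
    calc s n = RCLike.re (inner ℂ (R ((C ^ (2 ^ n)) z)) (R z) : ℂ) := by
              simp only [hsdef]; rw [innerR]
    _ ≤ ‖(inner ℂ (R ((C ^ (2 ^ n)) z)) (R z) : ℂ)‖ := RCLike.re_le_norm _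
    _ ≤ ‖R ((C ^ (2 ^ n)) z)‖ * ‖R z‖ := norm_inner_le_norm _ _
  have step2 : ∀ n : ℕ, 0 ≤ s n → s n ^ 2 ≤ s (n + 1) * q := by
    intro n hn
    have h1 := step n
    have h2 : s n ^ 2 ≤ (‖R ((C ^ (2 ^ n)) z)‖ * ‖R z‖) ^ 2 := by
      apply pow_le_pow_left₀ hn h1
    calc s n ^ 2 ≤ (‖R ((C ^ (2 ^ n)) z)‖ * ‖R z‖) ^ 2 := h2
    _ = ‖R ((C ^ (2 ^ n)) z)‖ ^ 2 * ‖R z‖ ^ 2 := by ring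
    _ = s (n + 1) * q := by rw [hsq n, hq]
  -- crude growth bound
  have pow_apply_le : ∀ (m : ℕ) (x : H), ‖(C ^ m) x‖ ≤ ‖C‖ ^ m * ‖x‖ := by
    intro m
    induction m with
    | zero => intro x; simp
    | succ m ih =>
      intro x
      rw [pow_succ, ContinuousLinearMap.mul_apply]
      calc ‖(C ^ m) (C x)‖ ≤ ‖C‖ ^ m * ‖C x‖ := ih (C x)
      _ ≤ ‖C‖ ^ m * (‖C‖ * ‖x‖) :=
        mul_le_mul_of_nonneg_left (C.le_opNorm x) (by positivity)
      _ = ‖C‖ ^ (m + 1) * ‖x‖ := by ring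
  have crude : ∀ n : ℕ, s n ≤ ‖B‖ * ‖z‖ ^ 2 * ‖C‖ ^ (2 ^ n) := by
    intro n
    calc s n ≤ ‖(inner ℂ (B ((C ^ (2 ^ n)) z)) z : ℂ)‖ := RCLike.re_le_norm _
    _ ≤ ‖B ((C ^ (2 ^ n)) z)‖ * ‖z‖ := norm_inner_le_norm _ _
    _ ≤ (‖B‖ * ‖(C ^ (2 ^ n)) z‖) * ‖z‖ :=
      mul_le_mul_of_nonneg_right (B.le_opNorm _) (norm_nonneg z)
    _ ≤ (‖B‖ * (‖C‖ ^ (2 ^ n) * ‖z‖)) * ‖z‖ := by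
      apply mul_le_mul_of_nonneg_right _ (norm_nonneg z)
      exact mul_le_mul_of_nonneg_left (pow_apply_le _ z) (norm_nonneg B)
    _ = ‖B‖ * ‖z‖ ^ 2 * ‖C‖ ^ (2 ^ n) := by ring
  -- goal: s 0 ≤ ‖C‖ * q
  have hs0 : s 0 = RCLike.re (inner ℂ (B (C z)) z : ℂ) := by
    simp only [hsdef]; norm_num
  rw [← hs0]
  rcases eq_or_lt_of_le qnn with hq0 | qpos
  · -- q = 0
    have hz0 : ‖R z‖ = 0 := by
      have : ‖R z‖ ^ 2 = 0 := by rw [← hq, ← hq0]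
      exact pow_eq_zero_iff (n := 2) (by norm_num) |>.mp this
    have := step 0
    rw [hz0, mul_zero] at this
    calc s 0 ≤ 0 := this
    _ ≤ ‖C‖ * q := by rw [← hq0, mul_zero]
  · by_contra hcon
    push_neg at hcon
    have s0pos : 0 < s 0 := lt_of_le_of_lt (by positivity) hcon
    have Cpos : 0 < ‖C‖ := by
      rcases eq_or_lt_of_le (norm_nonneg C) with h | h
      · exfalso
        have hC0 : C = 0 := by rwa [eq_comm, norm_eq_zero] at h
        have : s 0 = 0 := by
          rw [hs0, hC0]
          simp
        rw [this] at s0pos; exact lt_irrefl _ s0pos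
      · exact h
    have main : ∀ n : ℕ, s 0 ^ (2 ^ n) ≤ s n * q ^ (2 ^ n - 1) := by
      intro n
      induction n with
      | zero => simp
      | succ n ih =>
        have hsn : 0 ≤ s n := by
          by_contra h'
          push_neg at h'
          have h1 : s n * q ^ (2 ^ n - 1) ≤ 0 :=
            mul_nonpos_of_nonpos_of_nonneg h'.le (pow_nonneg qnn _)
          have h2 : 0 < s 0 ^ (2 ^ n) := pow_pos s0pos _
          linarith
        have e1 : (2 ^ n - 1) * 2 + 1 = 2 ^ (n + 1) - 1 := by
          have h1 : 1 ≤ 2 ^ n := Nat.one_le_two_pow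
          have h2 : (2:ℕ) ^ (n + 1) = 2 ^ n * 2 := pow_succ 2 n
          omega
        calc s 0 ^ (2 ^ (n + 1)) = (s 0 ^ (2 ^ n)) ^ 2 := by
              rw [← pow_mul, pow_succ]
        _ ≤ (s n * q ^ (2 ^ n - 1)) ^ 2 := pow_le_pow_left₀ (by positivity) ih 2
        _ = s n ^ 2 * (q ^ (2 ^ n - 1)) ^ 2 := by ring
        _ ≤ (s (n + 1) * q) * (q ^ (2 ^ n - 1)) ^ 2 :=
          mul_le_mul_of_nonneg_right (step2 n hsn) (by positivity)
        _ = s (n + 1) * (q * q ^ ((2 ^ n - 1) * 2)) := by rw [← pow_mul]; ring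
        _ = s (n + 1) * q ^ ((2 ^ n - 1) * 2 + 1) := by rw [← pow_succ']
        _ = s (n + 1) * q ^ (2 ^ (n + 1) - 1) := by rw [e1]
    have hb : 0 < ‖C‖ * q := mul_pos Cpos qpos
    have hρ : 1 < s 0 / (‖C‖ * q) := (one_lt_div hb).mpr hcon
    obtain ⟨n, hn⟩ := pow_unbounded_of_one_lt ((‖B‖ * ‖z‖ ^ 2) / q) hρ
    have key : (s 0 / (‖C‖ * q)) ^ (2 ^ n) ≤ (‖B‖ * ‖z‖ ^ 2) / q := by
      rw [div_pow, div_le_div_iff₀ (pow_pos hb _) qpos]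
      have h1 : s 0 ^ (2 ^ n) ≤ (‖B‖ * ‖z‖ ^ 2 * ‖C‖ ^ (2 ^ n)) * q ^ (2 ^ n - 1) :=
        le_trans (main n) (mul_le_mul_of_nonneg_right (crude n) (pow_nonneg qnn _))
      have h2 : q ^ (2 ^ n - 1) * q = q ^ (2 ^ n) := by
        rw [← pow_succ]
        congr 1
        have := Nat.one_le_two_pow (n := n)
        omega
      calc s 0 ^ (2 ^ n) * q ≤ (‖B‖ * ‖z‖ ^ 2 * ‖C‖ ^ (2 ^ n)) * q ^ (2 ^ n - 1) * q :=
            mul_le_mul_of_nonneg_right h1 qnn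
      _ = ‖B‖ * ‖z‖ ^ 2 * (‖C‖ ^ (2 ^ n) * (q ^ (2 ^ n - 1) * q)) := by ring
      _ = ‖B‖ * ‖z‖ ^ 2 * (‖C‖ ^ (2 ^ n) * q ^ (2 ^ n)) := by rw [h2]
      _ = ‖B‖ * ‖z‖ ^ 2 * (‖C‖ * q) ^ (2 ^ n) := by rw [mul_pow]
    have h3 : (s 0 / (‖C‖ * q)) ^ n ≤ (s 0 / (‖C‖ * q)) ^ (2 ^ n) :=
      pow_le_pow_right₀ hρ.le (Nat.lt_two_pow_self (n := n)).le
    linarith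

end Aux

theorem stmt14 {H : Type*} [NormedAddCommGroup H] [InnerProductSpace ℂ H] [CompleteSpace H]
    (A : H →L[ℂ] H) (hA : A.IsPositive)
    (T S : H →L[ℂ] H) (hT : (A ∘L T).IsPositive) (hS : (A ∘L S).IsPositive) :
    opNormA A (T - S) ≤ max (opNormA A T) (opNormA A S) := by
  have hAadj : ContinuousLinearMap.adjoint A = A := hA.isSelfAdjoint.adjoint_eq
  have h0 : (0 : H →L[ℂ] H) ≤ A := (nonneg_iff_isPositive A).mpr hA
  set R := CFC.sqrt A with hRdef
  have hRR : R * R = A := CFC.sqrt_mul_sqrt_self A h0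
  have hRsa : ContinuousLinearMap.adjoint R = R := by
    rw [← star_eq_adjoint]
    exact ((nonneg_iff_isPositive R).mp (CFC.sqrt_nonneg A)).isSelfAdjoint
  have hAapp : ∀ u : H, A u = R (R u) := by intro u; rw [← hRR]; rfl
  have innerA : ∀ u v : H, (inner ℂ (A u) v : ℂ) = inner ℂ (R u) (R v) := by
    intro u v
    have h := adjoint_inner_left R v (R u)
    rw [hRsa] at h
    rw [hAapp u, h]
  have Asym : ∀ u v : H, (inner ℂ (A u) v : ℂ) = inner ℂ u (A v) := by
    intro u v
    have h := adjoint_inner_left A v u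
    rw [hAadj] at h
    exact h
  have vn : ∀ z : H, vnormA A z = ‖R z‖ := by
    intro z
    unfold vnormA
    rw [innerA, inner_self_eq_norm_sq]
    exact Real.sqrt_sq (norm_nonneg _)
  -- pointwise A-adjointness of T and S
  have hadjmk : ∀ (P : H →L[ℂ] H), (A ∘L P).IsPositive →
      ∀ x, A (P x) = (ContinuousLinearMap.adjoint P) (A x) := by
    intro P hP x
    have h1 : A ∘L P = ContinuousLinearMap.adjoint P ∘L A := by
      conv_lhs => rw [← hP.isSelfAdjoint.adjoint_eq]
      rw [adjoint_comp, hAadj]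
    have := ContinuousLinearMap.ext_iff.mp h1 x
    simpa using this
  have hTadj := hadjmk T hT
  have hSadj := hadjmk S hS
  -- boundedness
  have bound : ∀ (P : H →L[ℂ] H), (∀ x, A (P x) = (ContinuousLinearMap.adjoint P) (A x)) →
      ∀ z : H, ‖R (P z)‖ ^ 2 ≤ ‖P ∘L P‖ * ‖R z‖ ^ 2 := by
    intro P hP z
    have hcomp : ∀ x, A ((P ∘L P) x) = (ContinuousLinearMap.adjoint (P ∘L P)) (A x) := by
      intro x
      rw [comp_apply, hP (P x), hP x, adjoint_comp, comp_apply]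
    have hreid := reid_aux A (P ∘L P) hA hcomp z
    have e1 : RCLike.re (inner ℂ (A ((P ∘L P) z)) z : ℂ) = ‖R (P z)‖ ^ 2 := by
      rw [comp_apply, hP (P z), adjoint_inner_left, innerA, inner_self_eq_norm_sq]
    have e2 : RCLike.re (inner ℂ (A z) z : ℂ) = ‖R z‖ ^ 2 := by
      rw [innerA, inner_self_eq_norm_sq]
    rw [e1, e2] at hreid
    exact hreid
  -- key seminorm bound via the sup
  have hkey : ∀ (P : H →L[ℂ] H), (∀ x, A (P x) = (ContinuousLinearMap.adjoint P) (A x)) →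
      ∀ z : H, ‖R (P z)‖ ≤ opNormA A P * ‖R z‖ := by
    intro P hP z
    have hbdd : BddAbove {c : ℝ | ∃ x : H, vnormA A x = 1 ∧ c = vnormA A (P x)} := by
      refine ⟨Real.sqrt ‖P ∘L P‖, ?_⟩
      rintro c ⟨x, hx, rfl⟩
      rw [vn] at hx ⊢
      have h1 : ‖R (P x)‖ ^ 2 ≤ ‖P ∘L P‖ := by
        have := bound P hP x
        rwa [hx, one_pow, mul_one] at this
      calc ‖R (P x)‖ = Real.sqrt (‖R (P x)‖ ^ 2) := (Real.sqrt_sq (norm_nonneg _)).symm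
      _ ≤ Real.sqrt ‖P ∘L P‖ := Real.sqrt_le_sqrt h1
    rcases eq_or_lt_of_le (norm_nonneg (R z)) with hz0 | hzpos
    · -- ‖R z‖ = 0
      have h1 : ‖R (P z)‖ ^ 2 ≤ 0 := by
        have := bound P hP z
        rw [← hz0] at this
        simpa using this
      have h2 : ‖R (P z)‖ = 0 := by nlinarith [norm_nonneg (R (P z))]
      rw [h2, ← hz0, mul_zero]
    · set t : ℝ := ‖R z‖ with htdef
      set u : H := ((t : ℂ))⁻¹ • z with hudef
      have htne : (t : ℂ) ≠ 0 := by
        simp only [ne_eq, Complex.ofReal_eq_zero]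
        exact ne_of_gt hzpos
      have hu : vnormA A u = 1 := by
        rw [vn, hudef, map_smul, norm_smul, norm_inv, Complex.norm_real,
          Real.norm_eq_abs, abs_of_pos hzpos]
        exact inv_mul_cancel₀ (ne_of_gt hzpos)
      have hmem : vnormA A (P u) ∈ {c : ℝ | ∃ x : H, vnormA A x = 1 ∧ c = vnormA A (P x)} :=
        ⟨u, hu, rfl⟩
      have hle : vnormA A (P u) ≤ opNormA A P := le_csSup hbdd hmem
      have hval : vnormA A (P u) = t⁻¹ * ‖R (P z)‖ := by
        rw [vn, hudef, map_smul, map_smul, norm_smul, norm_inv, Complex.norm_real,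
          Real.norm_eq_abs, abs_of_pos hzpos]
      rw [hval] at hle
      calc ‖R (P z)‖ = t * (t⁻¹ * ‖R (P z)‖) := by
            field_simp
      _ ≤ t * opNormA A P := by
            apply mul_le_mul_of_nonneg_left hle (le_of_lt hzpos)
      _ = opNormA A P * ‖R z‖ := by rw [htdef]; ring
  have hkeyT := hkey T hTadj
  have hkeyS := hkey S hSadj
  -- nonnegativity of the sups
  have hnn : ∀ (P : H →L[ℂ] H), 0 ≤ opNormA A P := by
    intro P
    apply Real.sSup_nonneg
    rintro c ⟨x, hx, rfl⟩
    rw [vn]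
    positivity
  set NT := opNormA A T with hNTdef
  set NS := opNormA A S with hNSdef
  set M := max NT NS with hMdef
  have hM0 : 0 ≤ M := le_trans (hnn T) (le_max_left _ _)
  -- form bounds
  have form_le : ∀ (P : H →L[ℂ] H), (∀ z : H, ‖R (P z)‖ ≤ opNormA A P * ‖R z‖) →
      ∀ z : H, RCLike.re (inner ℂ (A (P z)) z : ℂ) ≤ opNormA A P * ‖R z‖ ^ 2 := by
    intro P hP z
    calc RCLike.re (inner ℂ (A (P z)) z : ℂ) = RCLike.re (inner ℂ (R (P z)) (R z) : ℂ) := by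
          rw [innerA]
    _ ≤ ‖(inner ℂ (R (P z)) (R z) : ℂ)‖ := RCLike.re_le_norm _
    _ ≤ ‖R (P z)‖ * ‖R z‖ := norm_inner_le_norm _ _
    _ ≤ (opNormA A P * ‖R z‖) * ‖R z‖ :=
          mul_le_mul_of_nonneg_right (hP z) (norm_nonneg _)
    _ = opNormA A P * ‖R z‖ ^ 2 := by ring
  have form_leT := form_le T hkeyT
  have form_leS := form_le S hkeyS
  have form_nnT : ∀ z : H, 0 ≤ RCLike.re (inner ℂ (A (T z)) z : ℂ) := by
    intro z
    have := hT.inner_nonneg_left z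
    simpa using (Complex.nonneg_iff.mp this).1
  have form_nnS : ∀ z : H, 0 ≤ RCLike.re (inner ℂ (A (S z)) z : ℂ) := by
    intro z
    have := hS.inner_nonneg_left z
    simpa using (Complex.nonneg_iff.mp this).1
  -- main estimate
  apply Real.sSup_le _ hM0
  rintro c ⟨x, hx, rfl⟩
  rw [vn] at hx ⊢
  set v : H := (T - S) x with hvdef
  rcases eq_or_lt_of_le (norm_nonneg (R v)) with hv0 | hvpos
  · rw [← hv0]; exact hM0
  · set cc : ℝ := ‖R v‖ with hccdef
    set y : H := ((cc : ℂ))⁻¹ • v with hydef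
    have hccne : (cc : ℂ) ≠ 0 := by
      simp only [ne_eq, Complex.ofReal_eq_zero]
      exact ne_of_gt hvpos
    have hy : ‖R y‖ = 1 := by
      rw [hydef, map_smul, norm_smul, norm_inv, Complex.norm_real,
        Real.norm_eq_abs, abs_of_pos hvpos]
      exact inv_mul_cancel₀ (ne_of_gt hvpos)
    -- cc = re ⟪A v, y⟫
    have hAvy : RCLike.re (inner ℂ (A v) y : ℂ) = cc := by
      rw [hydef, innerA, map_smul, inner_smul_right, inner_self_eq_norm_sq_to_K]
      rw [← hccdef]
      have e : (@RCLike.ofReal ℂ _ cc) = ((cc : ℝ) : ℂ) := rfl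
      rw [e, ← Complex.ofReal_pow, ← Complex.ofReal_inv, ← Complex.ofReal_mul,
        RCLike.re_to_complex, Complex.ofReal_re, pow_two,
        inv_mul_cancel_left₀ (ne_of_gt hvpos)]
    -- symmetry for D := T - S
    have hDadj : ∀ w : H, A ((T - S) w) = (ContinuousLinearMap.adjoint (T - S)) (A w) := by
      intro w
      rw [sub_apply, map_sub, hTadj w, hSadj w, map_sub, sub_apply]
    have symD : RCLike.re (inner ℂ (A ((T - S) y)) x : ℂ)
        = RCLike.re (inner ℂ (A ((T - S) x)) y : ℂ) := by
      rw [hDadj y, adjoint_inner_left, Asym, ← inner_conj_symm]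
      exact RCLike.conj_re _
    -- expansion / polarization
    have expand : RCLike.re (inner ℂ (A ((T - S) (x + y))) (x + y) : ℂ)
        - RCLike.re (inner ℂ (A ((T - S) (x - y))) (x - y) : ℂ)
        = 4 * RCLike.re (inner ℂ (A ((T - S) x)) y : ℂ) := by
      have e1 : (T - S) (x + y) = (T - S) x + (T - S) y := map_add _ _ _
      have e2 : (T - S) (x - y) = (T - S) x - (T - S) y := map_sub _ _ _
      rw [e1, e2, map_add, map_sub, inner_add_left, inner_sub_left,
        inner_add_right, inner_add_right, inner_sub_right, inner_sub_right]
      simp only [map_add, map_sub]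
      rw [← symD]
      ring
    -- split the form of T - S
    have fsplit : ∀ w : H, RCLike.re (inner ℂ (A ((T - S) w)) w : ℂ)
        = RCLike.re (inner ℂ (A (T w)) w : ℂ) - RCLike.re (inner ℂ (A (S w)) w : ℂ) := by
      intro w
      rw [sub_apply, map_sub, inner_sub_left, map_sub]
    have hplus : RCLike.re (inner ℂ (A ((T - S) (x + y))) (x + y) : ℂ) ≤ M * ‖R (x + y)‖ ^ 2 := by
      rw [fsplit]
      have h1 := form_leT (x + y)
      have h2 := form_nnS (x + y)
      have h3 : NT * ‖R (x + y)‖ ^ 2 ≤ M * ‖R (x + y)‖ ^ 2 :=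
        mul_le_mul_of_nonneg_right (le_max_left _ _) (by positivity)
      rw [← hNTdef] at h1
      linarith
    have hminus : -(RCLike.re (inner ℂ (A ((T - S) (x - y))) (x - y) : ℂ)) ≤ M * ‖R (x - y)‖ ^ 2 := by
      rw [fsplit]
      have h1 := form_leS (x - y)
      have h2 := form_nnT (x - y)
      have h3 : NS * ‖R (x - y)‖ ^ 2 ≤ M * ‖R (x - y)‖ ^ 2 :=
        mul_le_mul_of_nonneg_right (le_max_right _ _) (by positivity)
      rw [← hNSdef] at h1
      linarith
    -- parallelogram law
    have par := parallelogram_law_with_norm ℂ (R x) (R y)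
    have hRadd : R (x + y) = R x + R y := map_add _ _ _
    have hRsub : R (x - y) = R x - R y := map_sub _ _ _
    have hpar : ‖R (x + y)‖ ^ 2 + ‖R (x - y)‖ ^ 2 = 4 := by
      rw [hRadd, hRsub]
      have : ‖R x + R y‖ * ‖R x + R y‖ + ‖R x - R y‖ * ‖R x - R y‖
          = 2 * (‖R x‖ * ‖R x‖ + ‖R y‖ * ‖R y‖) := by simpa only [sq] using par
      rw [hx, hy] at this
      nlinarith [this]
    -- conclude
    have h4 : 4 * cc ≤ 4 * M := by
      have e5 : 4 * cc = 4 * RCLike.re (inner ℂ (A ((T - S) x)) y : ℂ) := by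
        rw [← hvdef, hAvy]
      rw [e5, ← expand]
      calc RCLike.re (inner ℂ (A ((T - S) (x + y))) (x + y) : ℂ)
          - RCLike.re (inner ℂ (A ((T - S) (x - y))) (x - y) : ℂ)
          ≤ M * ‖R (x + y)‖ ^ 2 + M * ‖R (x - y)‖ ^ 2 := by linarith
      _ = M * (‖R (x + y)‖ ^ 2 + ‖R (x - y)‖ ^ 2) := by ring
      _ = 4 * M := by rw [hpar]; ring
    linarith
end

section
/- Let T, S ∈ B_A(H). Then 2‖T^{♯_A}S‖_A ≤ ‖TT^{♯_A} + SS^{♯_A}‖_A. -/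
open ContinuousLinearMap

section AuxLemmas

variable {H : Type*} [NormedAddCommGroup H] [InnerProductSpace ℂ H] [CompleteSpace H]
variable {A : H →L[ℂ] H}

lemma vnormA_nonneg (A : H →L[ℂ] H) (x : H) : 0 ≤ vnormA A x := Real.sqrt_nonneg _

lemma vnormA_sq (hA : A.IsPositive) (x : H) :
    vnormA A x ^ 2 = RCLike.re (inner ℂ (A x) x : ℂ) :=
  Real.sq_sqrt (hA.2 x)

lemma hermA (hA : A.IsPositive) (x y : H) :
    (inner ℂ (A y) x : ℂ) = starRingEnd ℂ (inner ℂ (A x) y : ℂ) := by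
  have h1 : adjoint A = A := hA.isSelfAdjoint
  have h2 : (inner ℂ (A y) x : ℂ) = (inner ℂ y (A x) : ℂ) := by
    conv_lhs => rw [← h1]
    exact ContinuousLinearMap.adjoint_inner_left A x y
  rw [h2, ← inner_conj_symm]

/-- The PSD sesquilinear form attached to a positive operator. -/
noncomputable def coreA (hA : A.IsPositive) : PreInnerProductSpace.Core ℂ H where
  inner x y := (inner ℂ (A x) y : ℂ)
  conj_inner_symm x y := by
    show starRingEnd ℂ (inner ℂ (A y) x : ℂ) = (inner ℂ (A x) y : ℂ)
    rw [← hermA hA y x]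
  re_inner_nonneg x := hA.2 x
  add_left x y z := by
    show (inner ℂ (A (x + y)) z : ℂ) = (inner ℂ (A x) z : ℂ) + (inner ℂ (A y) z : ℂ)
    rw [map_add, inner_add_left]
  smul_left x y r := by
    show (inner ℂ (A (r • x)) y : ℂ) = starRingEnd ℂ r * (inner ℂ (A x) y : ℂ)
    rw [map_smul, inner_smul_left]

lemma csA (hA : A.IsPositive) (x y : H) :
    ‖(inner ℂ (A x) y : ℂ)‖ ≤ vnormA A x * vnormA A y := by
  have h := @InnerProductSpace.Core.inner_mul_inner_self_le ℂ H _ _ _ (coreA hA) x y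
  have h' : ‖(inner ℂ (A x) y : ℂ)‖ * ‖(inner ℂ (A y) x : ℂ)‖
      ≤ RCLike.re (inner ℂ (A x) x : ℂ) * RCLike.re (inner ℂ (A y) y : ℂ) := h
  rw [hermA hA x y, RCLike.norm_conj] at h'
  have hx := vnormA_nonneg A x
  have hy := vnormA_nonneg A y
  have h2 : ‖(inner ℂ (A x) y : ℂ)‖ ^ 2 ≤ (vnormA A x * vnormA A y) ^ 2 := by
    rw [mul_pow, vnormA_sq hA, vnormA_sq hA]
    calc ‖(inner ℂ (A x) y : ℂ)‖ ^ 2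
        = ‖(inner ℂ (A x) y : ℂ)‖ * ‖(inner ℂ (A x) y : ℂ)‖ := by ring
      _ ≤ _ := h'
  calc ‖(inner ℂ (A x) y : ℂ)‖ = Real.sqrt (‖(inner ℂ (A x) y : ℂ)‖ ^ 2) :=
        (Real.sqrt_sq (norm_nonneg _)).symm
    _ ≤ Real.sqrt ((vnormA A x * vnormA A y) ^ 2) := Real.sqrt_le_sqrt h2
    _ = vnormA A x * vnormA A y := Real.sqrt_sq (mul_nonneg hx hy)

lemma vnormA_smul (hA : A.IsPositive) (c : ℂ) (x : H) :
    vnormA A (c • x) = ‖c‖ * vnormA A x := by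
  have : (inner ℂ (A (c • x)) (c • x) : ℂ) = (‖c‖ ^ 2 : ℝ) * (inner ℂ (A x) x : ℂ) := by
    rw [map_smul, inner_smul_left, inner_smul_right, ← mul_assoc, RCLike.conj_mul]
    norm_cast
  rw [vnormA, this]
  have hre : RCLike.re (((‖c‖ ^ 2 : ℝ) : ℂ) * (inner ℂ (A x) x : ℂ))
      = ‖c‖ ^ 2 * RCLike.re (inner ℂ (A x) x : ℂ) := by
    simp [← Complex.ofReal_pow]
  rw [hre, Real.sqrt_mul (by positivity), Real.sqrt_sq (norm_nonneg c)]
  rfl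

lemma vnormA_le_norm (hA : A.IsPositive) (z : H) :
    vnormA A z ≤ Real.sqrt ‖A‖ * ‖z‖ := by
  have h1 : RCLike.re (inner ℂ (A z) z : ℂ) ≤ ‖A‖ * (‖z‖ * ‖z‖) := by
    calc RCLike.re (inner ℂ (A z) z : ℂ) ≤ ‖(inner ℂ (A z) z : ℂ)‖ := RCLike.re_le_norm _
      _ ≤ ‖A z‖ * ‖z‖ := norm_inner_le_norm _ _
      _ ≤ ‖A‖ * ‖z‖ * ‖z‖ := by
          have := A.le_opNorm z
          nlinarith [norm_nonneg z]
      _ = ‖A‖ * (‖z‖ * ‖z‖) := by ring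
  calc vnormA A z ≤ Real.sqrt (‖A‖ * (‖z‖ * ‖z‖)) := Real.sqrt_le_sqrt h1
    _ = Real.sqrt ‖A‖ * ‖z‖ := by
        rw [Real.sqrt_mul (norm_nonneg A), Real.sqrt_mul_self (norm_nonneg z)]

end AuxLemmas


section BoundLemma

variable {H : Type*} [NormedAddCommGroup H] [InnerProductSpace ℂ H] [CompleteSpace H]
variable {A : H →L[ℂ] H}

lemma vnormA_bound (hA : A.IsPositive) (X : H →L[ℂ] H)
    (hX : A ∘L X = (adjoint X) ∘L A) (x : H) :
    vnormA A (X x) ≤ ‖X‖ * vnormA A x := by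
  -- powers commute with A via adjoints
  have hXk : ∀ k : ℕ, A ∘L (X ^ k) = ((adjoint X) ^ k) ∘L A := by
    intro k
    induction k with
    | zero => simp [ContinuousLinearMap.one_def]
    | succ k ih =>
      rw [pow_succ, pow_succ, ContinuousLinearMap.mul_def, ContinuousLinearMap.mul_def,
        ← ContinuousLinearMap.comp_assoc, ih, ContinuousLinearMap.comp_assoc, hX,
        ← ContinuousLinearMap.comp_assoc]
  have hadjpow : ∀ k : ℕ, (adjoint X) ^ k = adjoint (X ^ k) := by
    intro k
    rw [← star_eq_adjoint, ← star_eq_adjoint, ← star_pow]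
  -- key: ∥X^k x∥_A ^ 2 ≤ ∥x∥_A * ∥X^(2k) x∥_A
  have hkey : ∀ k : ℕ, vnormA A ((X ^ k) x) ^ 2 ≤ vnormA A x * vnormA A ((X ^ (2 * k)) x) := by
    intro k
    have h1 : A ((X ^ k) x) = adjoint (X ^ k) (A x) := by
      have := congrArg (fun (Y : H →L[ℂ] H) => Y x) (hXk k)
      simpa [hadjpow k] using this
    have h2 : (inner ℂ (A ((X ^ k) x)) ((X ^ k) x) : ℂ)
        = (inner ℂ (A x) ((X ^ (2 * k)) x) : ℂ) := by
      rw [h1, ContinuousLinearMap.adjoint_inner_left]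
      congr 1
      rw [two_mul, pow_add, ContinuousLinearMap.mul_apply]
    rw [vnormA_sq hA, h2]
    calc RCLike.re (inner ℂ (A x) ((X ^ (2 * k)) x) : ℂ)
        ≤ ‖(inner ℂ (A x) ((X ^ (2 * k)) x) : ℂ)‖ := RCLike.re_le_norm _
      _ ≤ vnormA A x * vnormA A ((X ^ (2 * k)) x) := csA hA _ _
  -- induction: a^(2^n) ≤ v^(2^n - 1) * g(2^n)
  have hn : ∀ n : ℕ, vnormA A (X x) ^ (2 ^ n)
      ≤ vnormA A x ^ (2 ^ n - 1) * vnormA A ((X ^ (2 ^ n)) x) := by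
    intro n
    induction n with
    | zero => simpa using hkey 0 |>.le.trans_eq' (by norm_num) |>.trans_eq (by norm_num) |>.le
    | succ n ih =>
      have h2n : (1 : ℕ) ≤ 2 ^ n := Nat.one_le_two_pow
      have e1 : vnormA A (X x) ^ 2 ^ (n + 1) = (vnormA A (X x) ^ 2 ^ n) ^ 2 := by
        rw [← pow_mul]; ring_nf
      have e2 : (vnormA A x ^ (2 ^ n - 1) * vnormA A ((X ^ 2 ^ n) x)) ^ 2
          = vnormA A x ^ (2 * (2 ^ n - 1)) * vnormA A ((X ^ 2 ^ n) x) ^ 2 := by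
        rw [mul_pow, ← pow_mul]; ring_nf
      have h3 : vnormA A ((X ^ 2 ^ n) x) ^ 2
          ≤ vnormA A x * vnormA A ((X ^ (2 ^ (n + 1))) x) := by
        have := hkey (2 ^ n)
        rwa [← pow_succ'] at this
      calc vnormA A (X x) ^ 2 ^ (n + 1) = (vnormA A (X x) ^ 2 ^ n) ^ 2 := e1
        _ ≤ (vnormA A x ^ (2 ^ n - 1) * vnormA A ((X ^ 2 ^ n) x)) ^ 2 := by
            apply pow_le_pow_left₀ (pow_nonneg (vnormA_nonneg A _) _) ih
        _ = vnormA A x ^ (2 * (2 ^ n - 1)) * vnormA A ((X ^ 2 ^ n) x) ^ 2 := e2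
        _ ≤ vnormA A x ^ (2 * (2 ^ n - 1))
            * (vnormA A x * vnormA A ((X ^ (2 ^ (n + 1))) x)) := by
            apply mul_le_mul_of_nonneg_left h3 (pow_nonneg (vnormA_nonneg A _) _)
        _ = vnormA A x ^ (2 ^ (n + 1) - 1) * vnormA A ((X ^ (2 ^ (n + 1))) x) := by
            rw [← mul_assoc, ← pow_succ]
            congr 2
            have : (2:ℕ) ≤ 2 ^ (n+1) := by
              calc (2:ℕ) = 2 ^ 1 := rfl
                _ ≤ 2 ^ (n + 1) := Nat.pow_le_pow_right (by norm_num) (by omega)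
            omega
  -- growth bound
  have hgb : ∀ n : ℕ, vnormA A ((X ^ (2 ^ n)) x)
      ≤ Real.sqrt ‖A‖ * (‖X‖ ^ (2 ^ n) * ‖x‖) := by
    intro n
    calc vnormA A ((X ^ (2 ^ n)) x) ≤ Real.sqrt ‖A‖ * ‖(X ^ (2 ^ n)) x‖ := vnormA_le_norm hA _
      _ ≤ Real.sqrt ‖A‖ * (‖X‖ ^ (2 ^ n) * ‖x‖) := by
          apply mul_le_mul_of_nonneg_left _ (Real.sqrt_nonneg _)
          calc ‖(X ^ (2 ^ n)) x‖ ≤ ‖X ^ (2 ^ n)‖ * ‖x‖ := (X ^ (2 ^ n)).le_opNorm x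
            _ ≤ ‖X‖ ^ (2 ^ n) * ‖x‖ := by
                apply mul_le_mul_of_nonneg_right (norm_pow_le' X (Nat.pow_pos (by norm_num))) (norm_nonneg x)
  -- conclude
  by_contra hcon
  push_neg at hcon
  have ha0 : 0 ≤ ‖X‖ * vnormA A x := mul_nonneg (norm_nonneg X) (vnormA_nonneg A x)
  have hapos : 0 < vnormA A (X x) := lt_of_le_of_lt ha0 hcon
  by_cases hv : vnormA A x = 0
  · have := (hn 1).trans (by
      rw [hv]
      simp : vnormA A x ^ (2 ^ 1 - 1) * vnormA A ((X ^ (2 ^ 1)) x) ≤ 0)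
    norm_num at this
    nlinarith
  by_cases hX0 : ‖X‖ = 0
  · have : X = 0 := norm_eq_zero.mp hX0
    rw [this] at hapos
    simp [vnormA] at hapos
  have hvpos : 0 < vnormA A x := lt_of_le_of_ne (vnormA_nonneg A x) (Ne.symm hv)
  have hXpos : 0 < ‖X‖ := lt_of_le_of_ne (norm_nonneg X) (Ne.symm hX0)
  have hbpos : 0 < ‖X‖ * vnormA A x := mul_pos hXpos hvpos
  set a := vnormA A (X x)
  set b := ‖X‖ * vnormA A x
  set C := Real.sqrt ‖A‖ * ‖x‖ / vnormA A x with hC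
  have hr1 : 1 < a / b := (one_lt_div hbpos).mpr hcon
  have hrn : ∀ n : ℕ, (a / b) ^ (2 ^ n) ≤ C := by
    intro n
    rw [div_pow, div_le_iff₀ (pow_pos hbpos _)]
    have hsplit : vnormA A x ^ (2 ^ n) = vnormA A x ^ (2 ^ n - 1) * vnormA A x := by
      rw [← pow_succ]
      congr 1
      have : (1:ℕ) ≤ 2 ^ n := Nat.one_le_two_pow
      omega
    have : C * b ^ (2 ^ n)
        = vnormA A x ^ (2 ^ n - 1) * (Real.sqrt ‖A‖ * (‖X‖ ^ (2 ^ n) * ‖x‖)) := by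
      rw [hC, mul_pow, hsplit]
      field_simp
    rw [this]
    calc a ^ (2 ^ n) ≤ vnormA A x ^ (2 ^ n - 1) * vnormA A ((X ^ (2 ^ n)) x) := hn n
      _ ≤ vnormA A x ^ (2 ^ n - 1) * (Real.sqrt ‖A‖ * (‖X‖ ^ (2 ^ n) * ‖x‖)) :=
          mul_le_mul_of_nonneg_left (hgb n) (pow_nonneg (vnormA_nonneg A _) _)
  obtain ⟨n, hCn⟩ := pow_unbounded_of_one_lt C hr1
  have h1 : (a / b) ^ n ≤ (a / b) ^ (2 ^ n) :=
    pow_le_pow_right₀ (le_of_lt hr1) (Nat.lt_two_pow_self (n := n)).le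
  linarith [hrn n]

end BoundLemma


section Main

variable {H : Type*} [NormedAddCommGroup H] [InnerProductSpace ℂ H] [CompleteSpace H]

theorem stmt15' (A : H →L[ℂ] H) (hA : A.IsPositive)
    (T S Ts Ss : H →L[ℂ] H)
    (hT1 : A ∘L Ts = (ContinuousLinearMap.adjoint T) ∘L A)
    (hS1 : A ∘L Ss = (ContinuousLinearMap.adjoint S) ∘L A) :
    2 * opNormA A (Ts ∘L S) ≤ opNormA A (T ∘L Ts + S ∘L Ss) := by
  have hAsa : adjoint A = A := hA.isSelfAdjoint
  -- A ∘ T = Ts† ∘ A and A ∘ S = Ss† ∘ A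
  have hAT : A ∘L T = (adjoint Ts) ∘L A := by
    have h := congrArg adjoint hT1
    rw [adjoint_comp, adjoint_comp, adjoint_adjoint, hAsa] at h
    exact h.symm
  have hAS : A ∘L S = (adjoint Ss) ∘L A := by
    have h := congrArg adjoint hS1
    rw [adjoint_comp, adjoint_comp, adjoint_adjoint, hAsa] at h
    exact h.symm
  set D := T ∘L Ts + S ∘L Ss with hDdef
  have hD : A ∘L D = (adjoint D) ∘L A := by
    have h1 : A ∘L (T ∘L Ts) = (adjoint (T ∘L Ts)) ∘L A := by
      rw [adjoint_comp, ← ContinuousLinearMap.comp_assoc, hAT,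
        ContinuousLinearMap.comp_assoc, hT1, ← ContinuousLinearMap.comp_assoc]
    have h2 : A ∘L (S ∘L Ss) = (adjoint (S ∘L Ss)) ∘L A := by
      rw [adjoint_comp, ← ContinuousLinearMap.comp_assoc, hAS,
        ContinuousLinearMap.comp_assoc, hS1, ← ContinuousLinearMap.comp_assoc]
    rw [hDdef, ContinuousLinearMap.comp_add, h1, h2, map_add,
      ContinuousLinearMap.add_comp]
  have hbD : ∀ z, vnormA A (D z) ≤ ‖D‖ * vnormA A z := vnormA_bound hA D hD
  set R : Set ℝ := {c : ℝ | ∃ z : H, vnormA A z = 1 ∧ c = vnormA A (D z)} with hRdef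
  have hRb : BddAbove R := by
    refine ⟨‖D‖, fun c hc => ?_⟩
    obtain ⟨z, hz, rfl⟩ := hc
    have := hbD z
    rwa [hz, mul_one] at this
  have hSup0 : 0 ≤ sSup R := by
    rcases Set.eq_empty_or_nonempty R with he | ⟨c, hc⟩
    · rw [he, Real.sSup_empty]
    · obtain ⟨z, hz, rfl⟩ := hc
      exact le_trans (vnormA_nonneg A _) (le_csSup hRb ⟨z, hz, rfl⟩)
  -- operator-seminorm bound by the sup
  have hDz : ∀ z, vnormA A (D z) ≤ sSup R * vnormA A z := by
    intro z
    by_cases hz : vnormA A z = 0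
    · have h1 := hbD z
      rw [hz, mul_zero] at h1
      rw [hz, mul_zero]
      exact h1
    · have hzpos : 0 < vnormA A z := lt_of_le_of_ne (vnormA_nonneg A z) (Ne.symm hz)
      set c : ℂ := (((vnormA A z)⁻¹ : ℝ) : ℂ) with hcdef
      have hcz : vnormA A (c • z) = 1 := by
        rw [vnormA_smul hA, hcdef, Complex.norm_real, Real.norm_eq_abs,
          abs_of_pos (inv_pos.mpr hzpos), inv_mul_cancel₀ hz]
      have hmem : vnormA A (D (c • z)) ∈ R := ⟨c • z, hcz, rfl⟩
      have hle := le_csSup hRb hmem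
      rw [map_smul, vnormA_smul hA] at hle
      have hnc : ‖c‖ = (vnormA A z)⁻¹ := by
        rw [hcdef, Complex.norm_real, Real.norm_eq_abs, abs_of_pos (inv_pos.mpr hzpos)]
      rw [hnc] at hle
      calc vnormA A (D z) = ((vnormA A z)⁻¹ * vnormA A (D z)) * vnormA A z := by
            field_simp
        _ ≤ sSup R * vnormA A z := by
            apply mul_le_mul_of_nonneg_right hle (le_of_lt hzpos)
  -- step 4b : for unit u v, ∥T u + S v∥_A ^ 2 ≤ 2 sSup R
  have key2 : ∀ u v : H, vnormA A u = 1 → vnormA A v = 1 →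
      vnormA A (T u + S v) ^ 2 ≤ 2 * sSup R := by
    intro u v hu hv
    obtain ⟨w, hwdef⟩ : ∃ w : H, w = T u + S v := ⟨_, rfl⟩
    rw [← hwdef]
    have hTu : (inner ℂ (A (T u)) w : ℂ) = (inner ℂ (A u) (Ts w) : ℂ) := by
      have h1 : A (T u) = adjoint Ts (A u) :=
        congrArg (fun (Y : H →L[ℂ] H) => Y u) hAT
      rw [h1, ContinuousLinearMap.adjoint_inner_left]
    have hSv : (inner ℂ (A (S v)) w : ℂ) = (inner ℂ (A v) (Ss w) : ℂ) := by
      have h1 : A (S v) = adjoint Ss (A v) :=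
        congrArg (fun (Y : H →L[ℂ] H) => Y v) hAS
      rw [h1, ContinuousLinearMap.adjoint_inner_left]
    have h4 : vnormA A w ^ 2 ≤ vnormA A (Ts w) + vnormA A (Ss w) := by
      rw [vnormA_sq hA]
      have hexp : (inner ℂ (A w) w : ℂ) = (inner ℂ (A (T u)) w : ℂ) + (inner ℂ (A (S v)) w : ℂ) := by
        conv_lhs => rw [hwdef]
        rw [map_add, inner_add_left, ← hwdef]
      rw [hexp, map_add, hTu, hSv]
      have e1 : RCLike.re (inner ℂ (A u) (Ts w) : ℂ) ≤ vnormA A (Ts w) := by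
        calc RCLike.re (inner ℂ (A u) (Ts w) : ℂ) ≤ ‖(inner ℂ (A u) (Ts w) : ℂ)‖ :=
              RCLike.re_le_norm _
          _ ≤ vnormA A u * vnormA A (Ts w) := csA hA _ _
          _ = vnormA A (Ts w) := by rw [hu, one_mul]
      have e2 : RCLike.re (inner ℂ (A v) (Ss w) : ℂ) ≤ vnormA A (Ss w) := by
        calc RCLike.re (inner ℂ (A v) (Ss w) : ℂ) ≤ ‖(inner ℂ (A v) (Ss w) : ℂ)‖ :=
              RCLike.re_le_norm _
          _ ≤ vnormA A v * vnormA A (Ss w) := csA hA _ _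
          _ = vnormA A (Ss w) := by rw [hv, one_mul]
      linarith
    have h6 : vnormA A (Ts w) ^ 2 + vnormA A (Ss w) ^ 2
        = RCLike.re (inner ℂ (A (D w)) w : ℂ) := by
      have hDw : A (D w) = A (T (Ts w)) + A (S (Ss w)) := by
        rw [hDdef]
        simp [map_add]
      have hTT : (inner ℂ (A (T (Ts w))) w : ℂ) = (inner ℂ (A (Ts w)) (Ts w) : ℂ) := by
        have h1 : A (T (Ts w)) = adjoint Ts (A (Ts w)) :=
          congrArg (fun (Y : H →L[ℂ] H) => Y (Ts w)) hAT
        rw [h1, ContinuousLinearMap.adjoint_inner_left]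
      have hSS : (inner ℂ (A (S (Ss w))) w : ℂ) = (inner ℂ (A (Ss w)) (Ss w) : ℂ) := by
        have h1 : A (S (Ss w)) = adjoint Ss (A (Ss w)) :=
          congrArg (fun (Y : H →L[ℂ] H) => Y (Ss w)) hAS
        rw [h1, ContinuousLinearMap.adjoint_inner_left]
      rw [hDw, inner_add_left, map_add, hTT, hSS, vnormA_sq hA, vnormA_sq hA]
    have h7 : RCLike.re (inner ℂ (A (D w)) w : ℂ) ≤ sSup R * vnormA A w ^ 2 := by
      calc RCLike.re (inner ℂ (A (D w)) w : ℂ) ≤ ‖(inner ℂ (A (D w)) w : ℂ)‖ :=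
            RCLike.re_le_norm _
        _ ≤ vnormA A (D w) * vnormA A w := csA hA _ _
        _ ≤ (sSup R * vnormA A w) * vnormA A w :=
            mul_le_mul_of_nonneg_right (hDz w) (vnormA_nonneg A w)
        _ = sSup R * vnormA A w ^ 2 := by ring
    -- combine
    have h8 : (vnormA A (Ts w) + vnormA A (Ss w)) ^ 2
        ≤ 2 * (sSup R * vnormA A w ^ 2) := by
      have := sq_nonneg (vnormA A (Ts w) - vnormA A (Ss w))
      nlinarith [h6, h7]
    by_cases hw : vnormA A w = 0
    · rw [hw]
      norm_num
      positivity
    · have hwpos : 0 < vnormA A w := lt_of_le_of_ne (vnormA_nonneg A w) (Ne.symm hw)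
      have hw2pos : 0 < vnormA A w ^ 2 := by positivity
      have h9 : (vnormA A w ^ 2) ^ 2 ≤ 2 * sSup R * vnormA A w ^ 2 := by
        calc (vnormA A w ^ 2) ^ 2 ≤ (vnormA A (Ts w) + vnormA A (Ss w)) ^ 2 := by
              apply pow_le_pow_left₀ (sq_nonneg _) h4
          _ ≤ 2 * (sSup R * vnormA A w ^ 2) := h8
          _ = 2 * sSup R * vnormA A w ^ 2 := by ring
      have := (mul_le_mul_iff_left₀ hw2pos).mp (by rw [← sq]; exact h9 : vnormA A w ^ 2 * vnormA A w ^ 2 ≤ 2 * sSup R * vnormA A w ^ 2)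
      exact this
  -- step 4 : for unit x y : 2 |⟨A (S x), T y⟩| ≤ sSup R
  have key3 : ∀ x y : H, vnormA A x = 1 → vnormA A y = 1 →
      2 * ‖(inner ℂ (A (S x)) (T y) : ℂ)‖ ≤ sSup R := by
    intro x y hx hy
    set p : ℂ := (inner ℂ (A (S x)) (T y) : ℂ) with hpdef
    obtain ⟨c, hc1, hc2⟩ : ∃ c : ℂ, ‖c‖ = 1 ∧
        starRingEnd ℂ c * starRingEnd ℂ p = (‖p‖ : ℂ) := by
      by_cases hp : p = 0
      · exact ⟨1, by simp, by simp [hp]⟩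
      · refine ⟨starRingEnd ℂ p / (‖p‖ : ℂ), ?_, ?_⟩
        · rw [norm_div, RCLike.norm_conj, Complex.norm_real, Real.norm_eq_abs,
            abs_of_nonneg (norm_nonneg p), div_self (norm_ne_zero_iff.mpr hp)]
        · have hpn : (‖p‖ : ℝ) ≠ 0 := norm_ne_zero_iff.mpr hp
          have hpn' : ((‖p‖ : ℝ) : ℂ) ≠ 0 := by exact_mod_cast hpn
          rw [map_div₀, RCLike.conj_conj, Complex.conj_ofReal, div_mul_eq_mul_div,
            Complex.mul_conj, Complex.normSq_eq_norm_sq,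
            Complex.ofReal_pow, sq, mul_div_assoc, div_self hpn', mul_one]
    have hcy : vnormA A (c • y) = 1 := by rw [vnormA_smul hA, hc1, one_mul, hy]
    have hkey2 := key2 (c • y) x hcy hx
    -- expand ∥T (c • y) + S x∥_A ^ 2
    obtain ⟨w, hwdef⟩ : ∃ w : H, w = T (c • y) + S x := ⟨_, rfl⟩
    rw [← hwdef] at hkey2
    have hexp : vnormA A w ^ 2
        = vnormA A (T (c • y)) ^ 2 + vnormA A (S x) ^ 2
          + 2 * RCLike.re (inner ℂ (A (T (c • y))) (S x) : ℂ) := by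
      rw [vnormA_sq hA, vnormA_sq hA, vnormA_sq hA]
      have : (inner ℂ (A w) w : ℂ)
          = (inner ℂ (A (T (c • y))) (T (c • y)) : ℂ)
            + (inner ℂ (A (T (c • y))) (S x) : ℂ)
            + (inner ℂ (A (S x)) (T (c • y)) : ℂ)
            + (inner ℂ (A (S x)) (S x) : ℂ) := by
        conv_lhs => rw [hwdef]
        rw [map_add, inner_add_left, inner_add_right, inner_add_right]
        ring
      rw [this]
      rw [hermA hA (S x) (T (c • y))]
      simp only [map_add, RCLike.conj_re]
      ring
    have hcross : RCLike.re (inner ℂ (A (T (c • y))) (S x) : ℂ) = ‖p‖ := by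
      have h1 : (inner ℂ (A (T (c • y))) (S x) : ℂ)
          = starRingEnd ℂ c * (inner ℂ (A (T y)) (S x) : ℂ) := by
        rw [map_smul, map_smul, inner_smul_left]
      have h2 : (inner ℂ (A (T y)) (S x) : ℂ) = starRingEnd ℂ p := by
        rw [hpdef, ← hermA hA (S x) (T y)]
      rw [h1, h2, hc2]
      simp
    have hTcy : vnormA A (T (c • y)) = vnormA A (T y) := by
      rw [map_smul, vnormA_smul hA, hc1, one_mul]
    have hCS : ‖p‖ ≤ vnormA A (S x) * vnormA A (T y) := csA hA _ _
    have hsq : 2 * (vnormA A (S x) * vnormA A (T y))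
        ≤ vnormA A (S x) ^ 2 + vnormA A (T y) ^ 2 := by
      have := two_mul_le_add_sq (vnormA A (S x)) (vnormA A (T y))
      linarith
    rw [hexp, hTcy, hcross] at hkey2
    linarith
  -- step 5 : for unit x, 2 * ∥Ts (S x)∥_A ≤ sSup R
  have key4 : ∀ x : H, vnormA A x = 1 → 2 * vnormA A (Ts (S x)) ≤ sSup R := by
    intro x hx
    set a := vnormA A (Ts (S x)) with hadef
    by_cases ha : a = 0
    · rw [ha, mul_zero]; exact hSup0
    · have hapos : 0 < a := lt_of_le_of_ne (vnormA_nonneg A _) (Ne.symm ha)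
      set q := Ts (S x) with hqdef
      set y : H := ((a⁻¹ : ℝ) : ℂ) • q with hydef
      have hy : vnormA A y = 1 := by
        rw [hydef, vnormA_smul hA, Complex.norm_real, Real.norm_eq_abs,
          abs_of_pos (inv_pos.mpr hapos), ← hadef, inv_mul_cancel₀ ha]
      have hiden : (inner ℂ (A (S x)) (T y) : ℂ) = (inner ℂ (A q) y : ℂ) := by
        have h1 : A q = adjoint T (A (S x)) := by
          have := congrArg (fun (Y : H →L[ℂ] H) => Y (S x)) hT1
          simpa using this
        rw [h1, ContinuousLinearMap.adjoint_inner_left]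
      have hval : (inner ℂ (A q) y : ℂ) = ((a⁻¹ * a ^ 2 : ℝ) : ℂ) := by
        rw [hydef, inner_smul_right]
        have hreal : (inner ℂ (A q) q : ℂ) = ((a ^ 2 : ℝ) : ℂ) := by
          have him : starRingEnd ℂ (inner ℂ (A q) q : ℂ) = (inner ℂ (A q) q : ℂ) :=
            (hermA hA q q).symm
          have hre : RCLike.re (inner ℂ (A q) q : ℂ) = a ^ 2 := (vnormA_sq hA q).symm
          rw [Complex.conj_eq_iff_re] at him
          rw [← him]
          norm_cast
        rw [hreal]
        norm_cast
      have hnorm : ‖(inner ℂ (A (S x)) (T y) : ℂ)‖ = a := by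
        rw [hiden, hval]
        have : a⁻¹ * a ^ 2 = a := by field_simp
        rw [this]
        simp [abs_of_pos hapos]
      have := key3 x y hx hy
      rwa [hnorm] at this
  -- final assembly
  rw [opNormA, opNormA]
  have hL : sSup {c : ℝ | ∃ x : H, vnormA A x = 1 ∧ c = vnormA A ((Ts ∘L S) x)}
      ≤ sSup R / 2 := by
    apply Real.sSup_le
    · rintro c ⟨x, hx, rfl⟩
      have := key4 x hx
      have hco : (Ts ∘L S) x = Ts (S x) := rfl
      rw [hco]
      linarith
    · linarith
  linarith

end Main


theorem stmt15 {H : Type*} [NormedAddCommGroup H] [InnerProductSpace ℂ H] [CompleteSpace H]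
    (A : H →L[ℂ] H) (hA : A.IsPositive)
    (T S Ts Ss : H →L[ℂ] H)
    (hT : IsReducedAdjoint A T Ts) (hS : IsReducedAdjoint A S Ss) :
    2 * opNormA A (Ts ∘L S) ≤ opNormA A (T ∘L Ts + S ∘L Ss) :=
  stmt15' A hA T S Ts Ss hT.1 hS.1
end
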